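/- arXiv:1201.0199 — 2 statements merged into one kernel-verified Lean document; each statement's English description precedes it below -/
import Mathlib

section
/- Let m, n ≥ 1 with m ≠ n and let Δ ⊂ ℝ^{m+n} be the root system of sl(m|n). For 0 ≤ m₀ ≤ m and 0 ≤ n₀ ≤ n set P(m₀|n₀) := L(m₀|n₀) ∪ N⁺(m₀|n₀), where L(m₀|n₀) := {ε_i − ε_j : i ≠ j and (i, j ≤ m₀ or i, j > m₀)} ∪ {δ_k − δ_l : k ≠ l and (k, l ≤ n₀ or k, l > n₀)} ∪ {±(ε_i − δ_l) : (i ≤ m₀ and l ≤ n₀) or (i > m₀ and l > n₀)}, and N⁺(m₀|n₀) := {ε_i − ε_j : i ≤ m₀ < j} ∪ {δ_k − δ_l : k ≤ n₀ < l} ∪ {ε_i − δ_l : i ≤ m₀, l > n₀} ∪ {δ_k − ε_j : k ≤ n₀, j > m₀}. Then a subset P ⊆ Δ is a cominuscule parabolic set of roots of Δ if and only if there exist σ ∈ S_m × S_n and a pair (m₀, n₀) with 0 ≤ m₀ ≤ m, 0 ≤ n₀ ≤ n, (m₀, n₀) ∉ {(0,0), (m,n)}, such that σ(P) = P(m₀|n₀);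 each such P(m₀|n₀) is itself a cominuscule parabolic set of roots, and for each cominuscule parabolic P the pair (m₀, n₀) with this property is unique. -/
open Pointwise

/-- A proper subset `P` of a symmetric root set `Δ` is a parabolic set of roots if
`Δ = P ∪ (-P)` and `P` is closed under sums lying in `Δ`. -/
def IsParabolic {V : Type*} [AddCommGroup V] (Δ P : Set V) : Prop :=
  P ⊂ Δ ∧ Δ = P ∪ (-P) ∧ ∀ α ∈ P, ∀ β ∈ P, α + β ∈ Δ → α + β ∈ P

/-- A parabolic set of roots is cominuscule if the sum of any two elements of its
nilradical `N⁺ = P \ (-P)` is not a root. -/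
def IsCominuscule {V : Type*} [AddCommGroup V] (Δ P : Set V) : Prop :=
  IsParabolic Δ P ∧ ∀ α ∈ P \ (-P), ∀ β ∈ P \ (-P), α + β ∉ Δ

namespace SL

variable {m n : ℕ}

/-- `ℝ^{m+n}`, with coordinates indexed by `Fin m ⊕ Fin n`. -/
abbrev V (m n : ℕ) := (Fin m ⊕ Fin n) → ℝ

noncomputable def ε (i : Fin m) : V m n := Pi.single (Sum.inl i) 1

noncomputable def δ (k : Fin n) : V m n := Pi.single (Sum.inr k) 1

/-- The root system of `sl(m|n)`. -/
noncomputable def Δroot (m n : ℕ) : Set (V m n) :=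
  {v | ∃ i j : Fin m, i ≠ j ∧ v = ε i - ε j} ∪
  {v | ∃ k l : Fin n, k ≠ l ∧ v = δ k - δ l} ∪
  {v | ∃ (i : Fin m) (l : Fin n), v = ε i - δ l ∨ v = δ l - ε i}

/-- The Levi component `L(m₀|n₀)`  (1-based `i ≤ m₀` becomes 0-based `(i:ℕ) < m₀`). -/
noncomputable def L (m n m₀ n₀ : ℕ) : Set (V m n) :=
  {v | ∃ i j : Fin m, i ≠ j ∧
      (((i : ℕ) < m₀ ∧ (j : ℕ) < m₀) ∨ (m₀ ≤ (i : ℕ) ∧ m₀ ≤ (j : ℕ))) ∧ v = ε i - ε j} ∪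
  {v | ∃ k l : Fin n, k ≠ l ∧
      (((k : ℕ) < n₀ ∧ (l : ℕ) < n₀) ∨ (n₀ ≤ (k : ℕ) ∧ n₀ ≤ (l : ℕ))) ∧ v = δ k - δ l} ∪
  {v | ∃ (i : Fin m) (l : Fin n),
      (((i : ℕ) < m₀ ∧ (l : ℕ) < n₀) ∨ (m₀ ≤ (i : ℕ) ∧ n₀ ≤ (l : ℕ))) ∧
      (v = ε i - δ l ∨ v = δ l - ε i)}

/-- The nilradical `N⁺(m₀|n₀)`. -/
noncomputable def Nplus (m n m₀ n₀ : ℕ) : Set (V m n) :=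
  {v | ∃ i j : Fin m, (i : ℕ) < m₀ ∧ m₀ ≤ (j : ℕ) ∧ v = ε i - ε j} ∪
  {v | ∃ k l : Fin n, (k : ℕ) < n₀ ∧ n₀ ≤ (l : ℕ) ∧ v = δ k - δ l} ∪
  {v | ∃ (i : Fin m) (l : Fin n), (i : ℕ) < m₀ ∧ n₀ ≤ (l : ℕ) ∧ v = ε i - δ l} ∪
  {v | ∃ (i : Fin m) (l : Fin n), (l : ℕ) < n₀ ∧ m₀ ≤ (i : ℕ) ∧ v = δ l - ε i}

/-- `P(m₀|n₀) = L(m₀|n₀) ⊔ N⁺(m₀|n₀)`. -/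
noncomputable def P (m n m₀ n₀ : ℕ) : Set (V m n) := L m n m₀ n₀ ∪ Nplus m n m₀ n₀

/-- The action of `(σ, τ) ∈ S_m × S_n` on `ℝ^{m+n}`, permuting the `ε`'s and `δ`'s. -/
def act (σ : Equiv.Perm (Fin m)) (τ : Equiv.Perm (Fin n)) : V m n → V m n :=
  fun v => v ∘ (Equiv.sumCongr σ τ).symm

end SL

namespace SL

variable {m n : ℕ}

-- my additions
noncomputable def e (x : Fin m ⊕ Fin n) : V m n := Pi.single x 1

lemma eps_eq (i : Fin m) : (ε i : V m n) = e (Sum.inl i) := rfl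
lemma delta_eq (k : Fin n) : (δ k : V m n) = e (Sum.inr k) := rfl

lemma e_apply (x y : Fin m ⊕ Fin n) : e x y = if y = x then 1 else 0 := by
  simp [e, Pi.single_apply]

lemma Δroot_eq (m n : ℕ) :
    Δroot m n = {v | ∃ x y : Fin m ⊕ Fin n, x ≠ y ∧ v = e x - e y} := by
  ext v
  constructor
  · rintro ((⟨i, j, hij, rfl⟩ | ⟨k, l, hkl, rfl⟩) | ⟨i, l, (rfl | rfl)⟩)
    · exact ⟨Sum.inl i, Sum.inl j, by simpa using hij, rfl⟩
    · exact ⟨Sum.inr k, Sum.inr l, by simpa using hkl, rfl⟩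
    · exact ⟨Sum.inl i, Sum.inr l, by simp, rfl⟩
    · exact ⟨Sum.inr l, Sum.inl i, by simp, rfl⟩
  · rintro ⟨(i | k), (j | l), hxy, rfl⟩
    · exact Or.inl (Or.inl ⟨i, j, by simpa using hxy, rfl⟩)
    · exact Or.inr ⟨i, l, Or.inl rfl⟩
    · exact Or.inr ⟨j, k, Or.inr rfl⟩
    · exact Or.inl (Or.inr ⟨k, l, by simpa using hxy, rfl⟩)

lemma zero_notMem_Δroot : (0 : V m n) ∉ Δroot m n := by
  rw [Δroot_eq]
  rintro ⟨x, y, hxy, h⟩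
  have := congrFun h x
  simp [e_apply, Ne.symm hxy, hxy] at this

open Classical in
noncomputable def phi (T : Set (Fin m ⊕ Fin n)) (v : V m n) : ℝ :=
  ∑ x : Fin m ⊕ Fin n, if x ∈ T then v x else 0

open Classical in
lemma phi_add (T : Set (Fin m ⊕ Fin n)) (v w : V m n) :
    phi T (v + w) = phi T v + phi T w := by
  classical
  simp only [phi, Pi.add_apply]
  rw [← Finset.sum_add_distrib]
  congr 1; ext x; split <;> simp

open Classical in
lemma phi_neg (T : Set (Fin m ⊕ Fin n)) (v : V m n) : phi T (-v) = - phi T v := by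
  classical
  simp only [phi, Pi.neg_apply]
  rw [← Finset.sum_neg_distrib]
  congr 1; ext x; split <;> simp

open Classical in
lemma phi_e (T : Set (Fin m ⊕ Fin n)) (x : Fin m ⊕ Fin n) :
    phi T (e x) = if x ∈ T then 1 else 0 := by
  classical
  simp only [phi, e_apply]
  rw [Finset.sum_eq_single x]
  · simp
  · intro y _ hyx
    split <;> simp [hyx]
  · simp

open Classical in
lemma phi_sub_e (T : Set (Fin m ⊕ Fin n)) (x y : Fin m ⊕ Fin n) :
    phi T (e x - e y) = (if x ∈ T then 1 else 0) - (if y ∈ T then 1 else 0) := by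
  have : e x - e y = e x + (-(e y)) := by ring
  rw [this, phi_add, phi_neg, phi_e, phi_e]
  ring

lemma neg_mem_Δroot {v : V m n} (h : v ∈ Δroot m n) : -v ∈ Δroot m n := by
  rw [Δroot_eq] at h ⊢
  obtain ⟨x, y, hxy, rfl⟩ := h
  exact ⟨y, x, hxy.symm, by rw [neg_sub]⟩

noncomputable def Q (T : Set (Fin m ⊕ Fin n)) : Set (V m n) :=
  {v | v ∈ Δroot m n ∧ 0 ≤ phi T v}

open Classical in
lemma mem_Q_iff {T : Set (Fin m ⊕ Fin n)} {x y : Fin m ⊕ Fin n} (hxy : x ≠ y) :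
    e x - e y ∈ Q T ↔ (x ∈ T ∨ y ∉ T) := by
  have hΔ : e x - e y ∈ Δroot m n := by
    rw [Δroot_eq]; exact ⟨x, y, hxy, rfl⟩
  simp only [Q, Set.mem_setOf_eq, hΔ, true_and, phi_sub_e]
  split_ifs with h1 h2 h2 <;> norm_num <;> tauto

lemma phi_root_vals {T : Set (Fin m ⊕ Fin n)} {v : V m n} (h : v ∈ Δroot m n) :
    phi T v = 1 ∨ phi T v = 0 ∨ phi T v = -1 := by
  classical
  rw [Δroot_eq] at h
  obtain ⟨x, y, hxy, rfl⟩ := h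
  rw [phi_sub_e]
  split_ifs <;> norm_num

lemma mem_neg_Q {T : Set (Fin m ⊕ Fin n)} {v : V m n} :
    v ∈ -(Q T) ↔ v ∈ Δroot m n ∧ phi T v ≤ 0 := by
  rw [Set.mem_neg]
  constructor
  · rintro ⟨hΔ, hφ⟩
    have h1 : v ∈ Δroot m n := by simpa using neg_mem_Δroot hΔ
    refine ⟨h1, ?_⟩
    rw [phi_neg] at hφ; linarith
  · rintro ⟨hΔ, hφ⟩
    exact ⟨neg_mem_Δroot hΔ, by rw [phi_neg]; linarith⟩

lemma isCominuscule_Q {T : Set (Fin m ⊕ Fin n)} {a b : Fin m ⊕ Fin n}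
    (ha : a ∈ T) (hb : b ∉ T) : IsCominuscule (Δroot m n) (Q T) := by
  classical
  have hab : b ≠ a := fun h => hb (h ▸ ha)
  have hsub : Q T ⊆ Δroot m n := fun v hv => hv.1
  refine ⟨⟨⟨hsub, ?_⟩, ?_, ?_⟩, ?_⟩
  · intro hcon
    have h1 : e b - e a ∈ Δroot m n := by rw [Δroot_eq]; exact ⟨b, a, hab, rfl⟩
    have h2 := hcon h1
    rw [mem_Q_iff hab] at h2
    tauto
  · ext v
    constructor
    · intro hv
      rcases le_or_gt 0 (phi T v) with h | h
      · exact Or.inl ⟨hv, h⟩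
      · exact Or.inr (mem_neg_Q.mpr ⟨hv, le_of_lt h⟩)
    · rintro (hv | hv)
      · exact hv.1
      · exact (mem_neg_Q.mp hv).1
  · rintro α ⟨hα, hφα⟩ β ⟨hβ, hφβ⟩ hΔ
    exact ⟨hΔ, by rw [phi_add]; linarith⟩
  · rintro α ⟨⟨hα, hφα⟩, hα'⟩ β ⟨⟨hβ, hφβ⟩, hβ'⟩ hΔ
    rw [mem_neg_Q] at hα' hβ'
    have hposα : ¬ phi T α ≤ 0 := fun hle => hα' ⟨hα, hle⟩
    have hposβ : ¬ phi T β ≤ 0 := fun hle => hβ' ⟨hβ, hle⟩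
    have h1 : phi T α = 1 := by
      rcases phi_root_vals (T := T) hα with h | h | h <;> linarith
    have h2 : phi T β = 1 := by
      rcases phi_root_vals (T := T) hβ with h | h | h <;> linarith
    have h3 := phi_root_vals (T := T) (v := α + β) hΔ
    rw [phi_add, h1, h2] at h3
    norm_num at h3

lemma mem_T_iff_Q {T : Set (Fin m ⊕ Fin n)} (hT : T ≠ Set.univ) (x : Fin m ⊕ Fin n) :
    x ∈ T ↔ ∃ y, e x - e y ∈ Q T ∧ e y - e x ∉ Q T := by
  constructor
  · intro hx
    obtain ⟨b, hb⟩ := Set.ne_univ_iff_exists_notMem T |>.mp hT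
    have hxb : x ≠ b := fun h => hb (h ▸ hx)
    refine ⟨b, (mem_Q_iff hxb).mpr (Or.inl hx), ?_⟩
    rw [mem_Q_iff hxb.symm]
    tauto
  · rintro ⟨y, h1, h2⟩
    by_cases hxy : x = y
    · subst hxy; tauto
    · rw [mem_Q_iff hxy] at h1
      rw [mem_Q_iff (Ne.symm hxy)] at h2
      tauto

lemma Q_inj {T₁ T₂ : Set (Fin m ⊕ Fin n)} (h1 : T₁ ≠ Set.univ) (h2 : T₂ ≠ Set.univ)
    (h : Q T₁ = Q T₂) : T₁ = T₂ := by
  ext x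
  rw [mem_T_iff_Q h1 x, mem_T_iff_Q h2 x, h]

lemma act_e (σ : Equiv.Perm (Fin m)) (τ : Equiv.Perm (Fin n)) (x : Fin m ⊕ Fin n) :
    act σ τ (e x) = e (Equiv.sumCongr σ τ x) := by
  funext z
  simp only [act, Function.comp_apply, e_apply]
  exact if_congr (Equiv.symm_apply_eq _) rfl rfl

lemma act_sub (σ : Equiv.Perm (Fin m)) (τ : Equiv.Perm (Fin n)) (v w : V m n) :
    act σ τ (v - w) = act σ τ v - act σ τ w := rfl

lemma sumCongr_inv (σ : Equiv.Perm (Fin m)) (τ : Equiv.Perm (Fin n)) :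
    Equiv.sumCongr σ⁻¹ τ⁻¹ = (Equiv.sumCongr σ τ).symm := by
  rw [Equiv.sumCongr_symm]; rfl

lemma act_act (σ : Equiv.Perm (Fin m)) (τ : Equiv.Perm (Fin n)) (v : V m n) :
    act σ⁻¹ τ⁻¹ (act σ τ v) = v := by
  funext z
  simp only [act, Function.comp_apply, sumCongr_inv, Equiv.symm_symm,
    Equiv.symm_apply_apply]

lemma act_act' (σ : Equiv.Perm (Fin m)) (τ : Equiv.Perm (Fin n)) (v : V m n) :
    act σ τ (act σ⁻¹ τ⁻¹ v) = v := by
  simpa using act_act σ⁻¹ τ⁻¹ v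

lemma act_injective (σ : Equiv.Perm (Fin m)) (τ : Equiv.Perm (Fin n)) :
    Function.Injective (act σ τ) :=
  Function.LeftInverse.injective (g := act σ⁻¹ τ⁻¹) (act_act σ τ)

lemma act_root (σ : Equiv.Perm (Fin m)) (τ : Equiv.Perm (Fin n)) (x y : Fin m ⊕ Fin n) :
    act σ τ (e x - e y) = e (Equiv.sumCongr σ τ x) - e (Equiv.sumCongr σ τ y) := by
  rw [act_sub, act_e, act_e]

lemma act_mem_Δroot {σ : Equiv.Perm (Fin m)} {τ : Equiv.Perm (Fin n)} {v : V m n} :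
    act σ τ v ∈ Δroot m n ↔ v ∈ Δroot m n := by
  constructor
  · intro h
    rw [Δroot_eq] at h ⊢
    obtain ⟨x, y, hxy, hv⟩ := h
    refine ⟨(Equiv.sumCongr σ τ).symm x, (Equiv.sumCongr σ τ).symm y,
      fun hc => hxy (by simpa using congrArg (Equiv.sumCongr σ τ) hc), ?_⟩
    have := congrArg (act σ⁻¹ τ⁻¹) hv
    rw [act_act, act_root] at this
    rw [this, sumCongr_inv]
  · intro h
    rw [Δroot_eq] at h ⊢
    obtain ⟨x, y, hxy, rfl⟩ := h
    rw [act_root]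
    exact ⟨_, _, fun hc => hxy ((Equiv.sumCongr σ τ).injective hc), rfl⟩

open Classical in
lemma phi_act (σ : Equiv.Perm (Fin m)) (τ : Equiv.Perm (Fin n))
    (T : Set (Fin m ⊕ Fin n)) (v : V m n) :
    phi ((Equiv.sumCongr σ τ) '' T) (act σ τ v) = phi T v := by
  classical
  simp only [phi, act, Function.comp_apply]
  refine Fintype.sum_equiv (Equiv.sumCongr σ τ).symm _ _ (fun x => ?_)
  exact if_congr Set.mem_image_equiv rfl rfl

lemma act_image_Q (σ : Equiv.Perm (Fin m)) (τ : Equiv.Perm (Fin n))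
    (T : Set (Fin m ⊕ Fin n)) :
    act σ τ '' Q T = Q ((Equiv.sumCongr σ τ) '' T) := by
  ext w
  constructor
  · rintro ⟨v, ⟨hΔ, hφ⟩, rfl⟩
    exact ⟨act_mem_Δroot.mpr hΔ, by rwa [phi_act]⟩
  · rintro ⟨hΔ, hφ⟩
    refine ⟨act σ⁻¹ τ⁻¹ w, ⟨act_mem_Δroot.mpr hΔ, ?_⟩, act_act' σ τ w⟩
    have := phi_act σ⁻¹ τ⁻¹ ((Equiv.sumCongr σ τ) '' T) w
    rw [sumCongr_inv, Equiv.symm_image_image] at this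
    rw [this]
    exact hφ

lemma exists_T_of_cominuscule {P : Set (V m n)} (hC : IsCominuscule (Δroot m n) P) :
    ∃ (T : Set (Fin m ⊕ Fin n)) (a b : Fin m ⊕ Fin n), a ∈ T ∧ b ∉ T ∧ P = Q T := by
  classical
  obtain ⟨⟨hss, hun, hcl⟩, hcom⟩ := hC
  have hsub : P ⊆ Δroot m n := hss.subset
  have h0 : (0 : V m n) ∉ P := fun h => zero_notMem_Δroot (hsub h)
  have hne : ∀ {x y : Fin m ⊕ Fin n}, e x - e y ∈ P → x ≠ y := by
    intro x y h hc
    subst hc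
    simp at h
    exact h0 h
  have tot : ∀ x y : Fin m ⊕ Fin n, x ≠ y → e x - e y ∉ P → e y - e x ∈ P := by
    intro x y hxy hnp
    have hΔ : e x - e y ∈ Δroot m n := by rw [Δroot_eq]; exact ⟨x, y, hxy, rfl⟩
    rw [hun] at hΔ
    rcases hΔ with h | h
    · exact absurd h hnp
    · rw [Set.mem_neg, neg_sub] at h
      exact h
  have nochain : ∀ x y z : Fin m ⊕ Fin n,
      e x - e y ∈ P → e y - e x ∉ P → e y - e z ∈ P → e z - e y ∉ P → False := by
    intro x y z h1 h2 h3 h4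
    have hxy : x ≠ y := hne h1
    have hyz : y ≠ z := hne h3
    by_cases hxz : x = z
    · subst hxz
      exact h2 h3
    · have hα : e x - e y ∈ P \ (-P) := by
        refine ⟨h1, fun hc => h2 ?_⟩
        rw [Set.mem_neg, neg_sub] at hc
        exact hc
      have hβ : e y - e z ∈ P \ (-P) := by
        refine ⟨h3, fun hc => h4 ?_⟩
        rw [Set.mem_neg, neg_sub] at hc
        exact hc
      have hsum : (e x - e y) + (e y - e z) ∈ Δroot m n := by
        rw [sub_add_sub_cancel, Δroot_eq]
        exact ⟨x, z, hxz, rfl⟩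
      exact hcom _ hα _ hβ hsum
  set T : Set (Fin m ⊕ Fin n) := {x | ∃ y, e x - e y ∈ P ∧ e y - e x ∉ P} with hT
  obtain ⟨v, hvΔ, hvP⟩ := Set.exists_of_ssubset hss
  have hv' := hvΔ
  rw [Δroot_eq] at hv'
  obtain ⟨a', b', hab', rfl⟩ := hv'
  have hb'a' : e b' - e a' ∈ P := tot _ _ hab' hvP
  have hbT : b' ∈ T := ⟨a', hb'a', hvP⟩
  have haT : a' ∉ T := by
    rintro ⟨c, hc1, hc2⟩
    exact nochain b' a' c hb'a' hvP hc1 hc2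
  refine ⟨T, b', a', hbT, haT, ?_⟩
  ext v
  constructor
  · intro hv
    have hvΔ := hsub hv
    rw [Δroot_eq] at hvΔ
    obtain ⟨x, y, hxy, rfl⟩ := hvΔ
    rw [mem_Q_iff hxy]
    by_cases hy : y ∈ T
    · obtain ⟨z, hz1, hz2⟩ := hy
      left
      by_cases hyx : e y - e x ∈ P
      · have hxz : x ≠ z := by
          rintro rfl
          exact hz2 hv
        have hxz1 : e x - e z ∈ P := by
          have : (e x - e y) + (e y - e z) ∈ Δroot m n := by
            rw [sub_add_sub_cancel, Δroot_eq]; exact ⟨x, z, hxz, rfl⟩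
          have := hcl _ hv _ hz1 this
          rwa [sub_add_sub_cancel] at this
        have hxz2 : e z - e x ∉ P := by
          intro hc
          have hzy : z ≠ y := (hne hz1).symm
          have : (e z - e x) + (e x - e y) ∈ Δroot m n := by
            rw [sub_add_sub_cancel, Δroot_eq]; exact ⟨z, y, hzy, rfl⟩
          have := hcl _ hc _ hv this
          rw [sub_add_sub_cancel] at this
          exact hz2 this
        exact ⟨z, hxz1, hxz2⟩
      · exact ⟨y, hv, hyx⟩
    · right; exact hy
  · intro hv
    have hvΔ := hv.1
    have hv' := hvΔ
    rw [Δroot_eq] at hv'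
    obtain ⟨x, y, hxy, rfl⟩ := hv'
    rw [mem_Q_iff hxy] at hv
    by_contra hnp
    have hyx : e y - e x ∈ P := tot _ _ hxy hnp
    have hyT : y ∈ T := ⟨x, hyx, hnp⟩
    rcases hv with hxT | hyT'
    · obtain ⟨z, hz1, hz2⟩ := hxT
      exact nochain y x z hyx hnp hz1 hz2
    · exact hyT' hyT

def T0 (m n m₀ n₀ : ℕ) : Set (Fin m ⊕ Fin n) :=
  {x | Sum.elim (fun i : Fin m => (i : ℕ) < m₀) (fun l : Fin n => (l : ℕ) < n₀) x}

@[simp] lemma inl_mem_T0 {m₀ n₀ : ℕ} {i : Fin m} :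
    Sum.inl i ∈ T0 m n m₀ n₀ ↔ (i : ℕ) < m₀ := Iff.rfl

@[simp] lemma inr_mem_T0 {m₀ n₀ : ℕ} {l : Fin n} :
    Sum.inr l ∈ T0 m n m₀ n₀ ↔ (l : ℕ) < n₀ := Iff.rfl

lemma mem_Q_ee {T : Set (Fin m ⊕ Fin n)} {i j : Fin m} (hij : i ≠ j) :
    (ε i - ε j : V m n) ∈ Q T ↔ (Sum.inl i ∈ T ∨ Sum.inl j ∉ T) :=
  mem_Q_iff (by simpa using hij)

lemma mem_Q_dd {T : Set (Fin m ⊕ Fin n)} {k l : Fin n} (hkl : k ≠ l) :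
    (δ k - δ l : V m n) ∈ Q T ↔ (Sum.inr k ∈ T ∨ Sum.inr l ∉ T) :=
  mem_Q_iff (by simpa using hkl)

lemma mem_Q_ed {T : Set (Fin m ⊕ Fin n)} {i : Fin m} {l : Fin n} :
    (ε i - δ l : V m n) ∈ Q T ↔ (Sum.inl i ∈ T ∨ Sum.inr l ∉ T) :=
  mem_Q_iff (by simp)

lemma mem_Q_de {T : Set (Fin m ⊕ Fin n)} {i : Fin m} {l : Fin n} :
    (δ l - ε i : V m n) ∈ Q T ↔ (Sum.inr l ∈ T ∨ Sum.inl i ∉ T) :=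
  mem_Q_iff (by simp)

lemma P_eq_Q_T0 (m₀ n₀ : ℕ) : P m n m₀ n₀ = Q (T0 m n m₀ n₀) := by
  ext v
  constructor
  · rintro (((⟨i, j, hij, hc, rfl⟩ | ⟨k, l, hkl, hc, rfl⟩) | ⟨i, l, hc, (rfl | rfl)⟩) |
      ((((⟨i, j, h1, h2, rfl⟩ | ⟨k, l, h1, h2, rfl⟩) | ⟨i, l, h1, h2, rfl⟩) | ⟨i, l, h1, h2, rfl⟩)))
    · rw [mem_Q_ee hij]; simp only [inl_mem_T0]; omega
    · rw [mem_Q_dd hkl]; simp only [inr_mem_T0]; omega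
    · rw [mem_Q_ed]; simp only [inl_mem_T0, inr_mem_T0]; omega
    · rw [mem_Q_de]; simp only [inl_mem_T0, inr_mem_T0]; omega
    · rw [mem_Q_ee (by intro h; subst h; omega)]; simp only [inl_mem_T0]; omega
    · rw [mem_Q_dd (by intro h; subst h; omega)]; simp only [inr_mem_T0]; omega
    · rw [mem_Q_ed]; simp only [inl_mem_T0, inr_mem_T0]; omega
    · rw [mem_Q_de]; simp only [inl_mem_T0, inr_mem_T0]; omega
  · intro hv
    have hvΔ := hv.1
    rcases hvΔ with ((⟨i, j, hij, rfl⟩ | ⟨k, l, hkl, rfl⟩) | ⟨i, l, (rfl | rfl)⟩)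
    · rw [mem_Q_ee hij] at hv
      simp only [inl_mem_T0] at hv
      by_cases h1 : (i : ℕ) < m₀ <;> by_cases h2 : (j : ℕ) < m₀
      · exact Or.inl (Or.inl (Or.inl ⟨i, j, hij, Or.inl ⟨h1, h2⟩, rfl⟩))
      · exact Or.inr (Or.inl (Or.inl (Or.inl ⟨i, j, h1, le_of_not_gt h2, rfl⟩)))
      · omega
      · exact Or.inl (Or.inl (Or.inl ⟨i, j, hij, Or.inr ⟨le_of_not_gt h1, le_of_not_gt h2⟩, rfl⟩))
    · rw [mem_Q_dd hkl] at hv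
      simp only [inr_mem_T0] at hv
      by_cases h1 : (k : ℕ) < n₀ <;> by_cases h2 : (l : ℕ) < n₀
      · exact Or.inl (Or.inl (Or.inr ⟨k, l, hkl, Or.inl ⟨h1, h2⟩, rfl⟩))
      · exact Or.inr (Or.inl (Or.inl (Or.inr ⟨k, l, h1, le_of_not_gt h2, rfl⟩)))
      · omega
      · exact Or.inl (Or.inl (Or.inr ⟨k, l, hkl, Or.inr ⟨le_of_not_gt h1, le_of_not_gt h2⟩, rfl⟩))
    · rw [mem_Q_ed] at hv
      simp only [inl_mem_T0, inr_mem_T0] at hv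
      by_cases h1 : (i : ℕ) < m₀ <;> by_cases h2 : (l : ℕ) < n₀
      · exact Or.inl (Or.inr ⟨i, l, Or.inl ⟨h1, h2⟩, Or.inl rfl⟩)
      · exact Or.inr (Or.inl (Or.inr ⟨i, l, h1, le_of_not_gt h2, rfl⟩))
      · omega
      · exact Or.inl (Or.inr ⟨i, l, Or.inr ⟨le_of_not_gt h1, le_of_not_gt h2⟩, Or.inl rfl⟩)
    · rw [mem_Q_de] at hv
      simp only [inl_mem_T0, inr_mem_T0] at hv
      by_cases h1 : (i : ℕ) < m₀ <;> by_cases h2 : (l : ℕ) < n₀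
      · exact Or.inl (Or.inr ⟨i, l, Or.inl ⟨h1, h2⟩, Or.inr rfl⟩)
      · omega
      · exact Or.inr (Or.inr ⟨i, l, h2, le_of_not_gt h1, rfl⟩)
      · exact Or.inl (Or.inr ⟨i, l, Or.inr ⟨le_of_not_gt h1, le_of_not_gt h2⟩, Or.inr rfl⟩)

lemma exists_perm {α : Type*} [Fintype α] [DecidableEq α] (p q : α → Prop)
    [DecidablePred p] [DecidablePred q]
    (h : Fintype.card {x // p x} = Fintype.card {x // q x}) :
    ∃ σ : Equiv.Perm α, ∀ x, q (σ x) ↔ p x := by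
  have h' : Fintype.card {x // ¬ p x} = Fintype.card {x // ¬ q x} := by
    rw [Fintype.card_subtype_compl, Fintype.card_subtype_compl, h]
  refine ⟨Equiv.subtypeCongr (Fintype.equivOfCardEq h) (Fintype.equivOfCardEq h'),
    fun x => ?_⟩
  by_cases hp : p x
  · have hx : Equiv.subtypeCongr (Fintype.equivOfCardEq h) (Fintype.equivOfCardEq h') x
        = ((Fintype.equivOfCardEq h) ⟨x, hp⟩ : α) := by
      simp [Equiv.subtypeCongr, hp]
    rw [hx]
    simpa [hp] using ((Fintype.equivOfCardEq h) ⟨x, hp⟩).2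
  · have hx : Equiv.subtypeCongr (Fintype.equivOfCardEq h) (Fintype.equivOfCardEq h') x
        = ((Fintype.equivOfCardEq h') ⟨x, hp⟩ : α) := by
      simp [Equiv.subtypeCongr, hp]
    rw [hx]
    simpa [hp] using ((Fintype.equivOfCardEq h') ⟨x, hp⟩).2

def finLtEquiv {M M₀ : ℕ} (h : M₀ ≤ M) : Fin M₀ ≃ {i : Fin M // (i : ℕ) < M₀} where
  toFun k := ⟨⟨k, lt_of_lt_of_le k.2 h⟩, k.2⟩
  invFun i := ⟨i.1, i.2⟩
  left_inv k := rfl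
  right_inv i := rfl

lemma card_subtype_lt {M M₀ : ℕ} (h : M₀ ≤ M) :
    Fintype.card {i : Fin M // (i : ℕ) < M₀} = M₀ := by
  exact (Fintype.card_congr (finLtEquiv h).symm).trans (Fintype.card_fin M₀)

open Classical in
lemma exists_perm_T (T : Set (Fin m ⊕ Fin n)) :
    ∃ (σ : Equiv.Perm (Fin m)) (τ : Equiv.Perm (Fin n)),
      Equiv.sumCongr σ τ '' T =
        T0 m n (Fintype.card {i : Fin m // Sum.inl i ∈ T})
               (Fintype.card {l : Fin n // Sum.inr l ∈ T}) := by
  classical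
  set m₀ := Fintype.card {i : Fin m // Sum.inl i ∈ T} with hm₀def
  set n₀ := Fintype.card {l : Fin n // Sum.inr l ∈ T} with hn₀def
  have hm₀ : m₀ ≤ m := le_of_le_of_eq (Fintype.card_subtype_le _) (Fintype.card_fin m)
  have hn₀ : n₀ ≤ n := le_of_le_of_eq (Fintype.card_subtype_le _) (Fintype.card_fin n)
  obtain ⟨σ, hσ⟩ := exists_perm (fun i : Fin m => Sum.inl i ∈ T) (fun i => (i : ℕ) < m₀)
    (by rw [card_subtype_lt hm₀])
  obtain ⟨τ, hτ⟩ := exists_perm (fun l : Fin n => Sum.inr l ∈ T) (fun l => (l : ℕ) < n₀)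
    (by rw [card_subtype_lt hn₀])
  refine ⟨σ, τ, ?_⟩
  ext x
  rw [Set.mem_image_equiv]
  cases x with
  | inl i =>
    simp only [Equiv.sumCongr_symm, Equiv.sumCongr_apply, Sum.map_inl, inl_mem_T0]
    have := hσ (σ.symm i)
    rw [Equiv.apply_symm_apply] at this
    exact this.symm
  | inr l =>
    simp only [Equiv.sumCongr_symm, Equiv.sumCongr_apply, Sum.map_inr, inr_mem_T0]
    have := hτ (τ.symm l)
    rw [Equiv.apply_symm_apply] at this
    exact this.symm

open Classical in
lemma card_inl_image (σ : Equiv.Perm (Fin m)) (τ : Equiv.Perm (Fin n))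
    (T : Set (Fin m ⊕ Fin n)) :
    Fintype.card {i : Fin m // Sum.inl i ∈ (Equiv.sumCongr σ τ) '' T}
      = Fintype.card {i : Fin m // Sum.inl i ∈ T} := by
  classical
  refine Fintype.card_congr (Equiv.subtypeEquiv σ (fun i => ?_)).symm
  rw [Set.mem_image_equiv]
  simp

open Classical in
lemma card_inr_image (σ : Equiv.Perm (Fin m)) (τ : Equiv.Perm (Fin n))
    (T : Set (Fin m ⊕ Fin n)) :
    Fintype.card {l : Fin n // Sum.inr l ∈ (Equiv.sumCongr σ τ) '' T}
      = Fintype.card {l : Fin n // Sum.inr l ∈ T} := by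
  classical
  refine Fintype.card_congr (Equiv.subtypeEquiv τ (fun l => ?_)).symm
  rw [Set.mem_image_equiv]
  simp

open Classical in
lemma card_inl_T0 {m₀ n₀ : ℕ} (h : m₀ ≤ m) :
    Fintype.card {i : Fin m // Sum.inl i ∈ T0 m n m₀ n₀} = m₀ := by
  classical
  have h2 : Fintype.card {i : Fin m // Sum.inl i ∈ T0 m n m₀ n₀}
      = Fintype.card {i : Fin m // (i : ℕ) < m₀} :=
    Fintype.card_congr (Equiv.subtypeEquivRight (fun i => inl_mem_T0))
  rw [h2, card_subtype_lt h]

open Classical in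
lemma card_inr_T0 {m₀ n₀ : ℕ} (h : n₀ ≤ n) :
    Fintype.card {l : Fin n // Sum.inr l ∈ T0 m n m₀ n₀} = n₀ := by
  classical
  have h2 : Fintype.card {l : Fin n // Sum.inr l ∈ T0 m n m₀ n₀}
      = Fintype.card {l : Fin n // (l : ℕ) < n₀} :=
    Fintype.card_congr (Equiv.subtypeEquivRight (fun l => inr_mem_T0))
  rw [h2, card_subtype_lt h]

lemma T0_mem (hm : 1 ≤ m) (hn : 1 ≤ n) {m₀ n₀ : ℕ} (h : (m₀, n₀) ≠ (0, 0)) :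
    ∃ a, a ∈ T0 m n m₀ n₀ := by
  have h' : m₀ ≠ 0 ∨ n₀ ≠ 0 := by
    by_contra hc; push_neg at hc; exact h (by simp [hc.1, hc.2])
  rcases h' with h' | h'
  · exact ⟨Sum.inl ⟨0, hm⟩, by simpa using Nat.pos_of_ne_zero h'⟩
  · exact ⟨Sum.inr ⟨0, hn⟩, by simpa using Nat.pos_of_ne_zero h'⟩

lemma T0_notMem {m₀ n₀ : ℕ} (hm₀ : m₀ ≤ m) (hn₀ : n₀ ≤ n) (h : (m₀, n₀) ≠ (m, n)) :
    ∃ b, b ∉ T0 m n m₀ n₀ := by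
  have h' : m₀ ≠ m ∨ n₀ ≠ n := by
    by_contra hc; push_neg at hc; exact h (by simp [hc.1, hc.2])
  rcases h' with h' | h'
  · exact ⟨Sum.inl ⟨m₀, lt_of_le_of_ne hm₀ h'⟩, by simp⟩
  · exact ⟨Sum.inr ⟨n₀, lt_of_le_of_ne hn₀ h'⟩, by simp⟩

lemma P_eq_of_img {P : Set (V m n)} {σ : Equiv.Perm (Fin m)} {τ : Equiv.Perm (Fin n)}
    {m₀ n₀ : ℕ} (himg : act σ τ '' P = SL.P m n m₀ n₀) :
    P = Q ((Equiv.sumCongr σ⁻¹ τ⁻¹) '' T0 m n m₀ n₀) := by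
  have h1 : act σ⁻¹ τ⁻¹ '' (act σ τ '' P) = P := by
    rw [← Set.image_comp]
    have hcomp : act σ⁻¹ τ⁻¹ ∘ act σ τ = id := funext (act_act σ τ)
    rw [hcomp, Set.image_id]
  rw [← h1, himg, P_eq_Q_T0, act_image_Q]

end SL

theorem stmt_2 (m n : ℕ) (hm : 1 ≤ m) (hn : 1 ≤ n) (hmn : m ≠ n)
    (P : Set (SL.V m n)) (hP : P ⊆ SL.Δroot m n) :
    (IsCominuscule (SL.Δroot m n) P ↔
      ∃ (σ : Equiv.Perm (Fin m)) (τ : Equiv.Perm (Fin n)) (m₀ n₀ : ℕ),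
        m₀ ≤ m ∧ n₀ ≤ n ∧ (m₀, n₀) ≠ (0, 0) ∧ (m₀, n₀) ≠ (m, n) ∧
        SL.act σ τ '' P = SL.P m n m₀ n₀) ∧
    (∀ m₀ n₀ : ℕ, m₀ ≤ m → n₀ ≤ n → (m₀, n₀) ≠ (0, 0) → (m₀, n₀) ≠ (m, n) →
      IsCominuscule (SL.Δroot m n) (SL.P m n m₀ n₀)) ∧
    (IsCominuscule (SL.Δroot m n) P →
      ∀ (m₀ n₀ m₀' n₀' : ℕ) (σ σ' : Equiv.Perm (Fin m)) (τ τ' : Equiv.Perm (Fin n)),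
        m₀ ≤ m → n₀ ≤ n → (m₀, n₀) ≠ (0, 0) → (m₀, n₀) ≠ (m, n) →
        m₀' ≤ m → n₀' ≤ n → (m₀', n₀') ≠ (0, 0) → (m₀', n₀') ≠ (m, n) →
        SL.act σ τ '' P = SL.P m n m₀ n₀ → SL.act σ' τ' '' P = SL.P m n m₀' n₀' →
        m₀ = m₀' ∧ n₀ = n₀') := by
  classical
  have key : ∀ (σ : Equiv.Perm (Fin m)) (τ : Equiv.Perm (Fin n)) (m₀ n₀ : ℕ),
      m₀ ≤ m → n₀ ≤ n → (m₀, n₀) ≠ (0, 0) → (m₀, n₀) ≠ (m, n) →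
      SL.act σ τ '' P = SL.P m n m₀ n₀ →
      P = SL.Q ((Equiv.sumCongr σ⁻¹ τ⁻¹) '' SL.T0 m n m₀ n₀) :=
    fun σ τ m₀ n₀ _ _ _ _ himg => SL.P_eq_of_img himg
  refine ⟨⟨?_, ?_⟩, ?_, ?_⟩
  · -- forward: cominuscule → exists
    intro hC
    obtain ⟨T, a, b, haT, hbT, hPQ⟩ := SL.exists_T_of_cominuscule hC
    obtain ⟨σ, τ, himg⟩ := SL.exists_perm_T T
    set m₀ := Fintype.card {i : Fin m // Sum.inl i ∈ T} with hm₀def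
    set n₀ := Fintype.card {l : Fin n // Sum.inr l ∈ T} with hn₀def
    have hm₀ : m₀ ≤ m := le_of_le_of_eq (Fintype.card_subtype_le _) (Fintype.card_fin m)
    have hn₀ : n₀ ≤ n := le_of_le_of_eq (Fintype.card_subtype_le _) (Fintype.card_fin n)
    have h00 : (m₀, n₀) ≠ (0, 0) := by
      cases a with
      | inl i =>
        have hpos : 0 < m₀ := Fintype.card_pos_iff.mpr ⟨⟨i, haT⟩⟩
        simp only [ne_eq, Prod.mk.injEq, not_and]
        omega
      | inr l =>
        have hpos : 0 < n₀ := Fintype.card_pos_iff.mpr ⟨⟨l, haT⟩⟩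
        simp only [ne_eq, Prod.mk.injEq, not_and]
        omega
    have hmn' : (m₀, n₀) ≠ (m, n) := by
      cases b with
      | inl j =>
        have hlt : m₀ < m := by
          have := Fintype.card_subtype_lt (p := fun i : Fin m => Sum.inl i ∈ T)
            (x := j) hbT
          simpa using this
        simp only [ne_eq, Prod.mk.injEq, not_and]
        omega
      | inr l =>
        have hlt : n₀ < n := by
          have := Fintype.card_subtype_lt (p := fun l : Fin n => Sum.inr l ∈ T)
            (x := l) hbT
          simpa using this
        simp only [ne_eq, Prod.mk.injEq, not_and]
        omega
    refine ⟨σ, τ, m₀, n₀, hm₀, hn₀, h00, hmn', ?_⟩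
    rw [hPQ, SL.act_image_Q, himg, ← SL.P_eq_Q_T0]
  · -- backward: exists → cominuscule
    rintro ⟨σ, τ, m₀, n₀, hm₀, hn₀, h00, hmn', himg⟩
    obtain ⟨a, ha⟩ := SL.T0_mem hm hn h00
    obtain ⟨b, hb⟩ := SL.T0_notMem hm₀ hn₀ hmn'
    rw [key σ τ m₀ n₀ hm₀ hn₀ h00 hmn' himg]
    refine SL.isCominuscule_Q (a := (Equiv.sumCongr σ⁻¹ τ⁻¹) a)
      (b := (Equiv.sumCongr σ⁻¹ τ⁻¹) b) (Set.mem_image_of_mem _ ha) ?_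
    rintro ⟨t, ht, hte⟩
    exact hb (((Equiv.sumCongr σ⁻¹ τ⁻¹).injective hte) ▸ ht)
  · -- part 2
    intro m₀ n₀ hm₀ hn₀ h00 hmn'
    obtain ⟨a, ha⟩ := SL.T0_mem hm hn h00
    obtain ⟨b, hb⟩ := SL.T0_notMem hm₀ hn₀ hmn'
    rw [SL.P_eq_Q_T0]
    exact SL.isCominuscule_Q ha hb
  · -- part 3: uniqueness
    intro _ m₀ n₀ m₀' n₀' σ σ' τ τ' hm₀ hn₀ h00 hmn1 hm₀' hn₀' h00' hmn1' himg himg'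
    have hPeq := key σ τ m₀ n₀ hm₀ hn₀ h00 hmn1 himg
    have h2 : SL.Q ((Equiv.sumCongr σ' τ') ''
          ((Equiv.sumCongr σ⁻¹ τ⁻¹) '' SL.T0 m n m₀ n₀))
        = SL.Q (SL.T0 m n m₀' n₀') := by
      rw [← SL.act_image_Q, ← hPeq, himg', SL.P_eq_Q_T0]
    obtain ⟨b, hb⟩ := SL.T0_notMem hm₀ hn₀ hmn1
    obtain ⟨b', hb'⟩ := SL.T0_notMem hm₀' hn₀' hmn1'
    have hSuniv : (Equiv.sumCongr σ' τ') ''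
        ((Equiv.sumCongr σ⁻¹ τ⁻¹) '' SL.T0 m n m₀ n₀) ≠ Set.univ := by
      rw [Set.ne_univ_iff_exists_notMem]
      refine ⟨(Equiv.sumCongr σ' τ') ((Equiv.sumCongr σ⁻¹ τ⁻¹) b), ?_⟩
      rintro ⟨x, ⟨t, ht, rfl⟩, hte⟩
      have h3 := (Equiv.sumCongr σ' τ').injective hte
      have h4 := (Equiv.sumCongr σ⁻¹ τ⁻¹).injective h3
      exact hb (h4 ▸ ht)
    have hT0univ : SL.T0 m n m₀' n₀' ≠ Set.univ :=
      Set.ne_univ_iff_exists_notMem _ |>.mpr ⟨b', hb'⟩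
    have hST : (Equiv.sumCongr σ' τ') ''
        ((Equiv.sumCongr σ⁻¹ τ⁻¹) '' SL.T0 m n m₀ n₀) = SL.T0 m n m₀' n₀' :=
      SL.Q_inj hSuniv hT0univ h2
    constructor
    · have hc1 : Fintype.card {i : Fin m // Sum.inl i ∈ (Equiv.sumCongr σ' τ') ''
          ((Equiv.sumCongr σ⁻¹ τ⁻¹) '' SL.T0 m n m₀ n₀)} = m₀ := by
        rw [SL.card_inl_image, SL.card_inl_image]
        exact SL.card_inl_T0 hm₀
      rw [hST, SL.card_inl_T0 hm₀'] at hc1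
      exact hc1.symm
    · have hc1 : Fintype.card {l : Fin n // Sum.inr l ∈ (Equiv.sumCongr σ' τ') ''
          ((Equiv.sumCongr σ⁻¹ τ⁻¹) '' SL.T0 m n m₀ n₀)} = n₀ := by
        rw [SL.card_inr_image, SL.card_inr_image]
        exact SL.card_inr_T0 hn₀
      rw [hST, SL.card_inr_T0 hn₀'] at hc1
      exact hc1.symm
end

section
/- Let m, n ≥ 1 and let Δ ⊂ ℝ^{m+n} be the root system of osp(2m+1|2n). Set P₀ := L₀ ∪ N₀⁺, where L₀ := {±ε_i ± ε_j : 2 ≤ i < j ≤ m} ∪ {±ε_i : 2 ≤ i ≤ m} ∪ {±δ_k ± δ_l : k ≠ l} ∪ {±2δ_k : 1 ≤ k ≤ n} ∪ {±δ_k : 1 ≤ k ≤ n} ∪ {±ε_i ± δ_k : 2 ≤ i ≤ m, 1 ≤ k ≤ n} and N₀⁺ := {ε₁ ± ε_j : 2 ≤ j ≤ m} ∪ {ε₁} ∪ {ε₁ ± δ_k : 1 ≤ k ≤ n}. Then a subset P ⊆ Δ is a cominuscule parabolic set of roots of Δ if and only if w(P) = P₀ for some w ∈ W; in particular P₀ is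 itself a cominuscule parabolic set of roots. -/
open Pointwise

namespace OspOdd

variable {m n : ℕ}

/-- `ℝ^{m+n}`, with coordinates indexed by `Fin m ⊕ Fin n`. -/
abbrev V (m n : ℕ) := (Fin m ⊕ Fin n) → ℝ

noncomputable def ε (i : Fin m) : V m n := Pi.single (Sum.inl i) 1

noncomputable def δ (k : Fin n) : V m n := Pi.single (Sum.inr k) 1

/-- The root system of `osp(2m+1|2n)`. -/
noncomputable def Δroot (m n : ℕ) : Set (V m n) :=
  {v | ∃ i j : Fin m, i ≠ j ∧
      (v = ε i + ε j ∨ v = ε i - ε j ∨ v = -ε i + ε j ∨ v = -ε i - ε j)} ∪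
  {v | ∃ i : Fin m, v = ε i ∨ v = -ε i} ∪
  {v | ∃ k l : Fin n, k ≠ l ∧
      (v = δ k + δ l ∨ v = δ k - δ l ∨ v = -δ k + δ l ∨ v = -δ k - δ l)} ∪
  {v | ∃ k : Fin n, v = (2 : ℝ) • δ k ∨ v = -((2 : ℝ) • δ k)} ∪
  {v | ∃ (i : Fin m) (k : Fin n),
      v = ε i + δ k ∨ v = ε i - δ k ∨ v = -ε i + δ k ∨ v = -ε i - δ k} ∪
  {v | ∃ k : Fin n, v = δ k ∨ v = -δ k}

/-- The Levi component `L₀` (1-based `2 ≤ i < j` becomes 0-based `1 ≤ i`, `i < j`;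
`ε₁` is the basis vector with 0-based index `0`). -/
noncomputable def L₀ (m n : ℕ) : Set (V m n) :=
  {v | ∃ i j : Fin m, 1 ≤ (i : ℕ) ∧ i < j ∧
      (v = ε i + ε j ∨ v = ε i - ε j ∨ v = -ε i + ε j ∨ v = -ε i - ε j)} ∪
  {v | ∃ i : Fin m, 1 ≤ (i : ℕ) ∧ (v = ε i ∨ v = -ε i)} ∪
  {v | ∃ k l : Fin n, k ≠ l ∧
      (v = δ k + δ l ∨ v = δ k - δ l ∨ v = -δ k + δ l ∨ v = -δ k - δ l)} ∪
  {v | ∃ k : Fin n, v = (2 : ℝ) • δ k ∨ v = -((2 : ℝ) • δ k)} ∪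
  {v | ∃ k : Fin n, v = δ k ∨ v = -δ k} ∪
  {v | ∃ (i : Fin m) (k : Fin n), 1 ≤ (i : ℕ) ∧
      (v = ε i + δ k ∨ v = ε i - δ k ∨ v = -ε i + δ k ∨ v = -ε i - δ k)}

/-- The nilradical `N₀⁺`. -/
noncomputable def N₀ (m n : ℕ) : Set (V m n) :=
  {v | ∃ i j : Fin m, (i : ℕ) = 0 ∧ 1 ≤ (j : ℕ) ∧ (v = ε i + ε j ∨ v = ε i - ε j)} ∪
  {v | ∃ i : Fin m, (i : ℕ) = 0 ∧ v = ε i} ∪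
  {v | ∃ (i : Fin m) (k : Fin n), (i : ℕ) = 0 ∧ (v = ε i + δ k ∨ v = ε i - δ k)}

/-- `P₀ = L₀ ⊔ N₀⁺`. -/
noncomputable def P₀ (m n : ℕ) : Set (V m n) := L₀ m n ∪ N₀ m n

/-- The action of an element of the Weyl group `W` of `so(2m+1) × sp(2n)`;
`σ, τ` are the permutations and `s, t` the (±1) signs. -/
def act (σ : Equiv.Perm (Fin m)) (τ : Equiv.Perm (Fin n))
    (s : Fin m → ℝ) (t : Fin n → ℝ) : V m n → V m n :=
  fun v => Sum.elim (fun i => s i * v (Sum.inl (σ.symm i)))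
    (fun k => t k * v (Sum.inr (τ.symm k)))

variable {m n : ℕ}

@[simp] lemma eps_inl (i j : Fin m) : (ε i : V m n) (Sum.inl j) = if j = i then 1 else 0 := by
  simp [ε, Pi.single_apply]

@[simp] lemma eps_inr (i : Fin m) (k : Fin n) : (ε i : V m n) (Sum.inr k) = 0 := by
  simp [ε, Pi.single_apply]

@[simp] lemma delta_inr (k l : Fin n) : (δ k : V m n) (Sum.inr l) = if l = k then 1 else 0 := by
  simp [δ, Pi.single_apply]

@[simp] lemma delta_inl (k : Fin n) (i : Fin m) : (δ k : V m n) (Sum.inl i) = 0 := by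
  simp [δ, Pi.single_apply]

lemma mem_ee {v : V m n} (i j : Fin m) (hij : i ≠ j)
    (h : v = ε i + ε j ∨ v = ε i - ε j ∨ v = -ε i + ε j ∨ v = -ε i - ε j) :
    v ∈ Δroot m n := Or.inl <| Or.inl <| Or.inl <| Or.inl <| Or.inl ⟨i, j, hij, h⟩

lemma mem_e {v : V m n} (i : Fin m) (h : v = ε i ∨ v = -ε i) : v ∈ Δroot m n :=
  Or.inl <| Or.inl <| Or.inl <| Or.inl <| Or.inr ⟨i, h⟩

lemma mem_dd {v : V m n} (k l : Fin n) (hkl : k ≠ l)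
    (h : v = δ k + δ l ∨ v = δ k - δ l ∨ v = -δ k + δ l ∨ v = -δ k - δ l) :
    v ∈ Δroot m n := Or.inl <| Or.inl <| Or.inl <| Or.inr ⟨k, l, hkl, h⟩

lemma mem_2d {v : V m n} (k : Fin n) (h : v = (2:ℝ) • δ k ∨ v = -((2:ℝ) • δ k)) :
    v ∈ Δroot m n := Or.inl <| Or.inl <| Or.inr ⟨k, h⟩

lemma mem_ed {v : V m n} (i : Fin m) (k : Fin n)
    (h : v = ε i + δ k ∨ v = ε i - δ k ∨ v = -ε i + δ k ∨ v = -ε i - δ k) :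
    v ∈ Δroot m n := Or.inl <| Or.inr ⟨i, k, h⟩

lemma mem_d {v : V m n} (k : Fin n) (h : v = δ k ∨ v = -δ k) : v ∈ Δroot m n :=
  Or.inr ⟨k, h⟩

lemma neg_mem {v : V m n} (h : v ∈ Δroot m n) : -v ∈ Δroot m n := by
  rcases h with ((((⟨i,j,hij,h⟩|⟨i,h⟩)|⟨k,l,hkl,h⟩)|⟨k,h⟩)|⟨i,k,h⟩)|⟨k,h⟩
  · refine mem_ee i j hij ?_
    rcases h with rfl|rfl|rfl|rfl
    · exact Or.inr (Or.inr (Or.inr (by abel)))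
    · exact Or.inr (Or.inr (Or.inl (by abel)))
    · exact Or.inr (Or.inl (by abel))
    · exact Or.inl (by abel)
  · refine mem_e i ?_
    rcases h with rfl|rfl
    · exact Or.inr rfl
    · exact Or.inl (by abel)
  · refine mem_dd k l hkl ?_
    rcases h with rfl|rfl|rfl|rfl
    · exact Or.inr (Or.inr (Or.inr (by abel)))
    · exact Or.inr (Or.inr (Or.inl (by abel)))
    · exact Or.inr (Or.inl (by abel))
    · exact Or.inl (by abel)
  · refine mem_2d k ?_
    rcases h with rfl|rfl
    · exact Or.inr rfl
    · exact Or.inl (by abel)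
  · refine mem_ed i k ?_
    rcases h with rfl|rfl|rfl|rfl
    · exact Or.inr (Or.inr (Or.inr (by abel)))
    · exact Or.inr (Or.inr (Or.inl (by abel)))
    · exact Or.inr (Or.inl (by abel))
    · exact Or.inl (by abel)
  · refine mem_d k ?_
    rcases h with rfl|rfl
    · exact Or.inr rfl
    · exact Or.inl (by abel)
lemma coeff_inl {v : V m n} (h : v ∈ Δroot m n) (i' : Fin m) :
    v (Sum.inl i') = -1 ∨ v (Sum.inl i') = 0 ∨ v (Sum.inl i') = 1 := by
  rcases h with ((((⟨i,j,hij,h⟩|⟨i,h⟩)|⟨k,l,hkl,h⟩)|⟨k,h⟩)|⟨i,k,h⟩)|⟨k,h⟩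
  · rcases h with rfl|rfl|rfl|rfl <;> simp <;> split_ifs <;> simp_all
  · rcases h with rfl|rfl <;> simp <;> split_ifs <;> simp_all
  · rcases h with rfl|rfl|rfl|rfl <;> simp
  · rcases h with rfl|rfl <;> simp
  · rcases h with rfl|rfl|rfl|rfl <;> simp <;> split_ifs <;> simp_all
  · rcases h with rfl|rfl <;> simp
lemma memL_ee {v : V m n} (i j : Fin m) (hi : 1 ≤ (i:ℕ)) (hj : 1 ≤ (j:ℕ)) (hij : i ≠ j)
    (h : v = ε i + ε j ∨ v = ε i - ε j ∨ v = -ε i + ε j ∨ v = -ε i - ε j) :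
    v ∈ P₀ m n := by
  rcases lt_or_gt_of_ne hij with hlt | hlt
  · exact Or.inl <| Or.inl <| Or.inl <| Or.inl <| Or.inl <| Or.inl ⟨i, j, hi, hlt, h⟩
  · refine Or.inl <| Or.inl <| Or.inl <| Or.inl <| Or.inl <| Or.inl ⟨j, i, hj, hlt, ?_⟩
    rcases h with rfl|rfl|rfl|rfl
    · exact Or.inl (by abel)
    · exact Or.inr (Or.inr (Or.inl (by abel)))
    · exact Or.inr (Or.inl (by abel))
    · exact Or.inr (Or.inr (Or.inr (by abel)))

lemma memL_e {v : V m n} (i : Fin m) (hi : 1 ≤ (i:ℕ)) (h : v = ε i ∨ v = -ε i) :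
    v ∈ P₀ m n :=
  Or.inl <| Or.inl <| Or.inl <| Or.inl <| Or.inl <| Or.inr ⟨i, hi, h⟩

lemma memL_dd {v : V m n} (k l : Fin n) (hkl : k ≠ l)
    (h : v = δ k + δ l ∨ v = δ k - δ l ∨ v = -δ k + δ l ∨ v = -δ k - δ l) :
    v ∈ P₀ m n := Or.inl <| Or.inl <| Or.inl <| Or.inl <| Or.inr ⟨k, l, hkl, h⟩

lemma memL_2d {v : V m n} (k : Fin n) (h : v = (2:ℝ) • δ k ∨ v = -((2:ℝ) • δ k)) :
    v ∈ P₀ m n := Or.inl <| Or.inl <| Or.inl <| Or.inr ⟨k, h⟩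

lemma memL_d {v : V m n} (k : Fin n) (h : v = δ k ∨ v = -δ k) : v ∈ P₀ m n :=
  Or.inl <| Or.inl <| Or.inr ⟨k, h⟩

lemma memL_ed {v : V m n} (i : Fin m) (k : Fin n) (hi : 1 ≤ (i:ℕ))
    (h : v = ε i + δ k ∨ v = ε i - δ k ∨ v = -ε i + δ k ∨ v = -ε i - δ k) :
    v ∈ P₀ m n := Or.inl <| Or.inr ⟨i, k, hi, h⟩

lemma memN_ee {v : V m n} (i j : Fin m) (hi : (i:ℕ) = 0) (hj : 1 ≤ (j:ℕ))
    (h : v = ε i + ε j ∨ v = ε i - ε j) : v ∈ P₀ m n :=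
  Or.inr <| Or.inl <| Or.inl ⟨i, j, hi, hj, h⟩

lemma memN_e {v : V m n} (i : Fin m) (hi : (i:ℕ) = 0) (h : v = ε i) : v ∈ P₀ m n :=
  Or.inr <| Or.inl <| Or.inr ⟨i, hi, h⟩

lemma memN_ed {v : V m n} (i : Fin m) (k : Fin n) (hi : (i:ℕ) = 0)
    (h : v = ε i + δ k ∨ v = ε i - δ k) : v ∈ P₀ m n :=
  Or.inr <| Or.inr ⟨i, k, hi, h⟩
set_option linter.unnecessarySeqFocus false

lemma P₀_eq (hm : 1 ≤ m) :
    P₀ m n = {v | v ∈ Δroot m n ∧ 0 ≤ v (Sum.inl ⟨0, hm⟩)} := by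
  ext v
  constructor
  · rintro ((((((⟨i,j,hi,hij,h⟩|⟨i,hi,h⟩)|⟨k,l,hkl,h⟩)|⟨k,h⟩)|⟨k,h⟩)|⟨i,k,hi,h⟩)|
      ((⟨i,j,hi,hj,h⟩|⟨i,hi,h⟩)|⟨i,k,hi,h⟩))
    · refine ⟨mem_ee i j (ne_of_lt hij) h, ?_⟩
      have hj : 1 ≤ (j:ℕ) := by omega
      rcases h with rfl|rfl|rfl|rfl <;> simp <;> split_ifs <;>
        simp_all [Fin.ext_iff] <;> first | omega | linarith
    · refine ⟨mem_e i h, ?_⟩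
      rcases h with rfl|rfl <;> simp <;> split_ifs <;>
        simp_all [Fin.ext_iff] <;> first | omega | linarith
    · refine ⟨mem_dd k l hkl h, ?_⟩
      rcases h with rfl|rfl|rfl|rfl <;> simp
    · refine ⟨mem_2d k h, ?_⟩
      rcases h with rfl|rfl <;> simp
    · refine ⟨mem_d k h, ?_⟩
      rcases h with rfl|rfl <;> simp
    · refine ⟨mem_ed i k h, ?_⟩
      rcases h with rfl|rfl|rfl|rfl <;> simp <;> split_ifs <;>
        simp_all [Fin.ext_iff] <;> first | omega | linarith
    · have hij : i ≠ j := by intro e; rw [e] at hi; omega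
      refine ⟨mem_ee i j hij (h.imp id Or.inl), ?_⟩
      rcases h with rfl|rfl <;> simp <;> split_ifs <;>
        simp_all [Fin.ext_iff] <;> first | omega | linarith
    · subst h
      refine ⟨mem_e i (Or.inl rfl), ?_⟩
      simp <;> split_ifs <;> simp_all [Fin.ext_iff] <;> first | omega | linarith
    · refine ⟨mem_ed i k (h.imp id Or.inl), ?_⟩
      rcases h with rfl|rfl <;> simp <;> split_ifs <;>
        simp_all [Fin.ext_iff] <;> first | omega | linarith
  · rintro ⟨hv, hc⟩
    rcases hv with ((((⟨i,j,hij,h⟩|⟨i,h⟩)|⟨k,l,hkl,h⟩)|⟨k,h⟩)|⟨i,k,h⟩)|⟨k,h⟩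
    · by_cases hi : (i:ℕ) = 0 <;> by_cases hj : (j:ℕ) = 0
      · exact absurd (Fin.ext (hi.trans hj.symm)) hij
      · rcases h with rfl|rfl|rfl|rfl
        · exact memN_ee i j hi (by omega) (Or.inl rfl)
        · exact memN_ee i j hi (by omega) (Or.inr rfl)
        · exfalso; simp at hc; split_ifs at hc <;>
            simp_all [Fin.ext_iff] <;> first | omega | linarith
        · exfalso; simp at hc; split_ifs at hc <;>
            simp_all [Fin.ext_iff] <;> first | omega | linarith
      · rcases h with rfl|rfl|rfl|rfl
        · exact memN_ee j i hj (by omega) (Or.inl (by abel))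
        · exfalso; simp at hc; split_ifs at hc <;>
            simp_all [Fin.ext_iff] <;> first | omega | linarith
        · exact memN_ee j i hj (by omega) (Or.inr (by abel))
        · exfalso; simp at hc; split_ifs at hc <;>
            simp_all [Fin.ext_iff] <;> first | omega | linarith
      · exact memL_ee i j (by omega) (by omega) hij h
    · by_cases hi : (i:ℕ) = 0
      · rcases h with rfl|rfl
        · exact memN_e i hi rfl
        · exfalso; simp at hc; split_ifs at hc <;>
            simp_all [Fin.ext_iff] <;> first | omega | linarith
      · exact memL_e i (by omega) h
    · exact memL_dd k l hkl h
    · exact memL_2d k h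
    · by_cases hi : (i:ℕ) = 0
      · rcases h with rfl|rfl|rfl|rfl
        · exact memN_ed i k hi (Or.inl rfl)
        · exact memN_ed i k hi (Or.inr rfl)
        · exfalso; simp at hc; split_ifs at hc <;>
            simp_all [Fin.ext_iff] <;> first | omega | linarith
        · exfalso; simp at hc; split_ifs at hc <;>
            simp_all [Fin.ext_iff] <;> first | omega | linarith
      · exact memL_ed i k (by omega) h
    · exact memL_d k h
lemma mem_ee' {v : V m n} {a b : ℝ} (i j : Fin m) (hij : i ≠ j)
    (ha : a = 1 ∨ a = -1) (hb : b = 1 ∨ b = -1) (h : v = a • ε i + b • ε j) :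
    v ∈ Δroot m n := by
  subst h
  rcases ha with rfl|rfl <;> rcases hb with rfl|rfl <;> refine mem_ee i j hij ?_
  · exact Or.inl (by simp)
  · exact Or.inr (Or.inl (by simp; abel))
  · exact Or.inr (Or.inr (Or.inl (by simp)))
  · exact Or.inr (Or.inr (Or.inr (by simp; abel)))

lemma mem_e' {v : V m n} {a : ℝ} (i : Fin m) (ha : a = 1 ∨ a = -1) (h : v = a • ε i) :
    v ∈ Δroot m n := by
  subst h
  rcases ha with rfl|rfl <;> refine mem_e i ?_
  · exact Or.inl (by simp)
  · exact Or.inr (by simp)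

lemma mem_dd' {v : V m n} {a b : ℝ} (k l : Fin n) (hkl : k ≠ l)
    (ha : a = 1 ∨ a = -1) (hb : b = 1 ∨ b = -1) (h : v = a • δ k + b • δ l) :
    v ∈ Δroot m n := by
  subst h
  rcases ha with rfl|rfl <;> rcases hb with rfl|rfl <;> refine mem_dd k l hkl ?_
  · exact Or.inl (by simp)
  · exact Or.inr (Or.inl (by simp; abel))
  · exact Or.inr (Or.inr (Or.inl (by simp)))
  · exact Or.inr (Or.inr (Or.inr (by simp; abel)))

lemma mem_d' {v : V m n} {a : ℝ} (k : Fin n) (ha : a = 1 ∨ a = -1) (h : v = a • δ k) :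
    v ∈ Δroot m n := by
  subst h
  rcases ha with rfl|rfl <;> refine mem_d k ?_
  · exact Or.inl (by simp)
  · exact Or.inr (by simp)

lemma mem_2d' {v : V m n} {a : ℝ} (k : Fin n) (ha : a = 1 ∨ a = -1)
    (h : v = a • ((2:ℝ) • δ k)) : v ∈ Δroot m n := by
  subst h
  rcases ha with rfl|rfl <;> refine mem_2d k ?_
  · exact Or.inl (by simp)
  · exact Or.inr (by simp)

lemma mem_ed' {v : V m n} {a b : ℝ} (i : Fin m) (k : Fin n)
    (ha : a = 1 ∨ a = -1) (hb : b = 1 ∨ b = -1) (h : v = a • ε i + b • δ k) :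
    v ∈ Δroot m n := by
  subst h
  rcases ha with rfl|rfl <;> rcases hb with rfl|rfl <;> refine mem_ed i k ?_
  · exact Or.inl (by simp)
  · exact Or.inr (Or.inl (by simp; abel))
  · exact Or.inr (Or.inr (Or.inl (by simp)))
  · exact Or.inr (Or.inr (Or.inr (by simp; abel)))

lemma P₀_cominuscule (hm : 1 ≤ m) : IsCominuscule (Δroot m n) (P₀ m n) := by
  have hEq := P₀_eq (n := n) hm
  have hsubset : P₀ m n ⊆ Δroot m n := by rw [hEq]; intro v hv; exact hv.1
  constructor
  · refine ⟨⟨hsubset, fun hcontra => ?_⟩, ?_, ?_⟩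
    · have h1 : (-ε ⟨0,hm⟩ : V m n) ∈ Δroot m n := mem_e _ (Or.inr rfl)
      have h2 := hcontra h1
      rw [hEq] at h2
      have h3 := h2.2
      norm_num at h3
    · ext v
      constructor
      · intro hv
        rcases le_or_gt 0 (v (Sum.inl ⟨0,hm⟩)) with hc | hc
        · exact Or.inl (by rw [hEq]; exact ⟨hv, hc⟩)
        · refine Or.inr ?_
          rw [Set.mem_neg, hEq]
          refine ⟨neg_mem hv, ?_⟩
          simp; linarith
      · rintro (hv | hv)
        · exact hsubset hv
        · rw [Set.mem_neg] at hv
          have h2 := neg_mem (hsubset hv)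
          rwa [neg_neg] at h2
    · intro α hα β hβ hs
      rw [hEq] at hα hβ ⊢
      refine ⟨hs, ?_⟩
      have h1 := hα.2
      have h2 := hβ.2
      simp only [Pi.add_apply]
      linarith
  · intro α hα β hβ hs
    obtain ⟨hα1, hα2⟩ := hα
    obtain ⟨hβ1, hβ2⟩ := hβ
    rw [hEq] at hα1 hβ1
    have key : ∀ γ : V m n, γ ∈ Δroot m n → 0 ≤ γ (Sum.inl ⟨0,hm⟩) →
        (γ ∉ -(P₀ m n)) → γ (Sum.inl ⟨0,hm⟩) = 1 := by
      intro γ h1 h2 h3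
      rcases coeff_inl h1 ⟨0,hm⟩ with h|h|h
      · linarith
      · exfalso
        refine h3 (Set.mem_neg.mpr ?_)
        rw [hEq]
        exact ⟨neg_mem h1, by simp [h]⟩
      · exact h
    have hα3 := key α hα1.1 hα1.2 hα2
    have hβ3 := key β hβ1.1 hβ1.2 hβ2
    have := coeff_inl hs ⟨0,hm⟩
    simp only [Pi.add_apply, hα3, hβ3] at this
    rcases this with h|h|h <;> norm_num at h
lemma neg_sign {a : ℝ} (ha : a = 1 ∨ a = -1) : -a = 1 ∨ -a = -1 := by
  rcases ha with rfl|rfl <;> norm_num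

section Act
variable (σ : Equiv.Perm (Fin m)) (τ : Equiv.Perm (Fin n)) (s : Fin m → ℝ) (t : Fin n → ℝ)

lemma act_add (u v : V m n) :
    act σ τ s t (u + v) = act σ τ s t u + act σ τ s t v := by
  funext x; cases x <;> simp [act, mul_add]

lemma act_sub (u v : V m n) :
    act σ τ s t (u - v) = act σ τ s t u - act σ τ s t v := by
  funext x; cases x <;> simp [act, mul_sub]

lemma act_neg (v : V m n) : act σ τ s t (-v) = -act σ τ s t v := by
  funext x; cases x <;> simp [act]

lemma act_smul (c : ℝ) (v : V m n) : act σ τ s t (c • v) = c • act σ τ s t v := by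
  funext x; cases x <;> simp [act] <;> ring

lemma act_eps (i : Fin m) : act σ τ s t (ε i) = s (σ i) • ε (σ i) := by
  funext x
  cases x with
  | inl a =>
    simp only [act, Sum.elim_inl, eps_inl, Pi.smul_apply, Equiv.symm_apply_eq, smul_eq_mul]
    split_ifs with h <;> simp [h]
  | inr k => simp [act]

lemma act_delta (k : Fin n) : act σ τ s t (δ k) = t (τ k) • δ (τ k) := by
  funext x
  cases x with
  | inl a => simp [act]
  | inr l =>
    simp only [act, Sum.elim_inr, delta_inr, Pi.smul_apply, Equiv.symm_apply_eq, smul_eq_mul]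
    split_ifs with h <;> simp [h]

lemma act_mapsTo (hs : ∀ i, s i = 1 ∨ s i = -1) (ht : ∀ k, t k = 1 ∨ t k = -1)
    {v : V m n} (hv : v ∈ Δroot m n) : act σ τ s t v ∈ Δroot m n := by
  rcases hv with ((((⟨i,j,hij,h⟩|⟨i,h⟩)|⟨k,l,hkl,h⟩)|⟨k,h⟩)|⟨i,k,h⟩)|⟨k,h⟩
  · have hne : σ i ≠ σ j := fun e => hij (σ.injective e)
    rcases h with rfl|rfl|rfl|rfl
    · exact mem_ee' (σ i) (σ j) hne (hs _) (hs _) (by rw [act_add, act_eps, act_eps])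
    · exact mem_ee' (σ i) (σ j) hne (hs _) (neg_sign (hs _))
        (by rw [act_sub, act_eps, act_eps, neg_smul, ← sub_eq_add_neg])
    · exact mem_ee' (σ i) (σ j) hne (neg_sign (hs _)) (hs _)
        (by rw [act_add, act_neg, act_eps, act_eps, neg_smul])
    · exact mem_ee' (σ i) (σ j) hne (neg_sign (hs _)) (neg_sign (hs _))
        (by rw [act_sub, act_neg, act_eps, act_eps, neg_smul, neg_smul, ← sub_eq_add_neg])
  · rcases h with rfl|rfl
    · exact mem_e' (σ i) (hs _) (by rw [act_eps])
    · exact mem_e' (σ i) (neg_sign (hs _)) (by rw [act_neg, act_eps, neg_smul])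
  · have hne : τ k ≠ τ l := fun e => hkl (τ.injective e)
    rcases h with rfl|rfl|rfl|rfl
    · exact mem_dd' (τ k) (τ l) hne (ht _) (ht _) (by rw [act_add, act_delta, act_delta])
    · exact mem_dd' (τ k) (τ l) hne (ht _) (neg_sign (ht _))
        (by rw [act_sub, act_delta, act_delta, neg_smul, ← sub_eq_add_neg])
    · exact mem_dd' (τ k) (τ l) hne (neg_sign (ht _)) (ht _)
        (by rw [act_add, act_neg, act_delta, act_delta, neg_smul])
    · exact mem_dd' (τ k) (τ l) hne (neg_sign (ht _)) (neg_sign (ht _))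
        (by rw [act_sub, act_neg, act_delta, act_delta, neg_smul, neg_smul, ← sub_eq_add_neg])
  · rcases h with rfl|rfl
    · exact mem_2d' (τ k) (ht _) (by rw [act_smul, act_delta, smul_comm])
    · exact mem_2d' (τ k) (neg_sign (ht _))
        (by rw [act_neg, act_smul, act_delta, smul_comm, ← neg_smul])
  · rcases h with rfl|rfl|rfl|rfl
    · exact mem_ed' (σ i) (τ k) (hs _) (ht _) (by rw [act_add, act_eps, act_delta])
    · exact mem_ed' (σ i) (τ k) (hs _) (neg_sign (ht _))
        (by rw [act_sub, act_eps, act_delta, neg_smul, ← sub_eq_add_neg])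
    · exact mem_ed' (σ i) (τ k) (neg_sign (hs _)) (ht _)
        (by rw [act_add, act_neg, act_eps, act_delta, neg_smul])
    · exact mem_ed' (σ i) (τ k) (neg_sign (hs _)) (neg_sign (ht _))
        (by rw [act_sub, act_neg, act_eps, act_delta, neg_smul, neg_smul, ← sub_eq_add_neg])
  · rcases h with rfl|rfl
    · exact mem_d' (τ k) (ht _) (by rw [act_delta])
    · exact mem_d' (τ k) (neg_sign (ht _)) (by rw [act_neg, act_delta, neg_smul])

lemma act_act (hs : ∀ i, s i = 1 ∨ s i = -1) (ht : ∀ k, t k = 1 ∨ t k = -1) (v : V m n) :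
    act σ τ s t (act σ.symm τ.symm (fun i => s (σ i)) (fun k => t (τ k)) v) = v := by
  funext x
  cases x with
  | inl i =>
    simp only [act, Sum.elim_inl, Equiv.symm_symm, Equiv.apply_symm_apply]
    rcases hs i with h|h <;> rw [h] <;> ring
  | inr k =>
    simp only [act, Sum.elim_inr, Equiv.symm_symm, Equiv.apply_symm_apply]
    rcases ht k with h|h <;> rw [h] <;> ring

lemma act_injective (hs : ∀ i, s i = 1 ∨ s i = -1) (ht : ∀ k, t k = 1 ∨ t k = -1) :
    Function.Injective (act σ τ s t) := by
  intro u v h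
  funext x
  cases x with
  | inl i =>
    have h2 := congrFun h (Sum.inl (σ i))
    simp only [act, Sum.elim_inl, Equiv.symm_apply_apply] at h2
    rcases hs (σ i) with hh|hh <;> rw [hh] at h2 <;> [simpa using h2; skip]
    simp only [neg_one_mul, neg_inj] at h2; exact h2
  | inr k =>
    have h2 := congrFun h (Sum.inr (τ k))
    simp only [act, Sum.elim_inr, Equiv.symm_apply_apply] at h2
    rcases ht (τ k) with hh|hh <;> rw [hh] at h2 <;> [simpa using h2; skip]
    simp only [neg_one_mul, neg_inj] at h2; exact h2

lemma act_image_Δ (hs : ∀ i, s i = 1 ∨ s i = -1) (ht : ∀ k, t k = 1 ∨ t k = -1) :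
    act σ τ s t '' Δroot m n = Δroot m n := by
  apply Set.Subset.antisymm
  · rintro _ ⟨v, hv, rfl⟩
    exact act_mapsTo σ τ s t hs ht hv
  · intro v hv
    refine ⟨act σ.symm τ.symm (fun i => s (σ i)) (fun k => t (τ k)) v,
      act_mapsTo _ _ _ _ (fun i => hs (σ i)) (fun k => ht (τ k)) hv, act_act σ τ s t hs ht v⟩

end Act
lemma comin_transfer {W : Type*} [AddCommGroup W] {Δ P : Set W} {f : W → W}
    (hadd : ∀ x y, f (x + y) = f x + f y) (hneg : ∀ x, f (-x) = -f x)
    (hinj : Function.Injective f) (himg : f '' Δ = Δ) (hPΔ : P ⊆ Δ)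
    (h : IsCominuscule Δ (f '' P)) : IsCominuscule Δ P := by
  obtain ⟨⟨hss, hcov, hcl⟩, hcom⟩ := h
  have hmapsto : ∀ x ∈ Δ, f x ∈ Δ := fun x hx => himg ▸ Set.mem_image_of_mem f hx
  have hsym : ∀ x, x ∈ Δ → -x ∈ Δ := by
    intro x hx
    rw [hcov] at hx ⊢
    rcases hx with hx | hx
    · exact Or.inr (Set.mem_neg.mpr (by rwa [neg_neg]))
    · exact Or.inl (Set.mem_neg.mp hx)
  refine ⟨⟨hPΔ.ssubset_of_ne fun e => hss.ne (by rw [e, himg]), ?_, ?_⟩, ?_⟩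
  · ext α
    constructor
    · intro hα
      have h1 : f α ∈ Δ := hmapsto α hα
      rw [hcov] at h1
      rcases h1 with h1 | h1
      · obtain ⟨p, hp, he⟩ := h1
        exact Or.inl ((hinj he) ▸ hp)
      · rw [Set.mem_neg, ← hneg] at h1
        obtain ⟨p, hp, he⟩ := h1
        exact Or.inr (Set.mem_neg.mpr ((hinj he) ▸ hp))
    · rintro (hα | hα)
      · exact hPΔ hα
      · have h2 := hsym _ (hPΔ (Set.mem_neg.mp hα))
        rwa [neg_neg] at h2
  · intro α hα β hβ hsum
    have h1 : f (α + β) ∈ f '' P := by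
      rw [hadd]
      exact hcl _ (Set.mem_image_of_mem f hα) _ (Set.mem_image_of_mem f hβ)
        (by rw [← hadd]; exact hmapsto _ hsum)
    obtain ⟨p, hp, he⟩ := h1
    exact (hinj he) ▸ hp
  · intro α hα β hβ hsum
    have hgood : ∀ γ, γ ∈ P \ (-P) → f γ ∈ (f '' P) \ (-(f '' P)) := by
      rintro γ ⟨h1, h2⟩
      refine ⟨Set.mem_image_of_mem f h1, fun hc => h2 ?_⟩
      rw [Set.mem_neg, ← hneg] at hc
      obtain ⟨p, hp, he⟩ := hc
      rw [Set.mem_neg]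
      exact (hinj he) ▸ hp
    have h3 := hcom _ (hgood _ hα) _ (hgood _ hβ)
    rw [← hadd] at h3
    exact h3 (hmapsto _ hsum)
lemma classify (hm : 1 ≤ m) {P : Set (V m n)} (hP : P ⊆ Δroot m n)
    (h : IsCominuscule (Δroot m n) P) :
    ∃ (i₀ : Fin m) (s₀ : ℝ), (s₀ = 1 ∨ s₀ = -1) ∧
      P = {v | v ∈ Δroot m n ∧ 0 ≤ s₀ * v (Sum.inl i₀)} := by
  obtain ⟨⟨hss, hcov, hcl⟩, hcom⟩ := h
  -- step 1 : all δ-roots lie in the Levi part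
  have hδ : ∀ k : Fin n, (δ k : V m n) ∈ P ∧ (-δ k : V m n) ∈ P := by
    intro k
    have h2 : (δ k : V m n) + δ k ∈ Δroot m n := mem_2d k (Or.inl (two_smul ℝ (δ k)).symm)
    have h2' : (-δ k : V m n) + -δ k ∈ Δroot m n := by
      refine mem_2d k (Or.inr ?_); rw [two_smul]; abel
    have key : ∀ u : V m n, (u + u ∈ Δroot m n) → u ∈ P → -u ∈ P := by
      intro u h3 h4
      by_contra hc
      exact hcom u ⟨h4, fun hm2 => hc (Set.mem_neg.mp hm2)⟩ u
        ⟨h4, fun hm2 => hc (Set.mem_neg.mp hm2)⟩ h3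
    have hor : (δ k : V m n) ∈ P ∨ (-δ k : V m n) ∈ P := by
      have h5 : (δ k : V m n) ∈ Δroot m n := mem_d k (Or.inl rfl)
      rw [hcov] at h5
      exact h5.imp id Set.mem_neg.mp
    rcases hor with h4 | h4
    · exact ⟨h4, key _ h2 h4⟩
    · have h5 := key _ h2' h4
      rw [neg_neg] at h5
      exact ⟨h5, h4⟩
  have hdd : ∀ k l : Fin n, k ≠ l → ∀ v : V m n,
      (v = δ k + δ l ∨ v = δ k - δ l ∨ v = -δ k + δ l ∨ v = -δ k - δ l) → v ∈ P := by
    intro k l hkl v hv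
    rcases hv with rfl|rfl|rfl|rfl
    · exact hcl _ (hδ k).1 _ (hδ l).1 (mem_dd k l hkl (Or.inl rfl))
    · rw [sub_eq_add_neg]
      exact hcl _ (hδ k).1 _ (hδ l).2 (mem_dd k l hkl (Or.inr (Or.inl (sub_eq_add_neg _ _).symm)))
    · exact hcl _ (hδ k).2 _ (hδ l).1 (mem_dd k l hkl (Or.inr (Or.inr (Or.inl rfl))))
    · rw [sub_eq_add_neg]
      exact hcl _ (hδ k).2 _ (hδ l).2
        (mem_dd k l hkl (Or.inr (Or.inr (Or.inr (sub_eq_add_neg _ _).symm))))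
  have h2dP : ∀ k : Fin n, ((2:ℝ) • δ k : V m n) ∈ P ∧ (-((2:ℝ) • δ k) : V m n) ∈ P := by
    intro k
    constructor
    · rw [two_smul]
      exact hcl _ (hδ k).1 _ (hδ k).1 (mem_2d k (Or.inl (two_smul ℝ (δ k)).symm))
    · have e : (-((2:ℝ) • δ k) : V m n) = -δ k + -δ k := by rw [two_smul]; abel
      rw [e]
      exact hcl _ (hδ k).2 _ (hδ k).2 (mem_2d k (Or.inr e.symm))
  -- step 2 : find an ε-root outside P
  obtain ⟨ρ, hρΔ, hρP⟩ := Set.exists_of_ssubset hss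
  have hex : ∃ i : Fin m, (ε i : V m n) ∉ P ∨ (-ε i : V m n) ∉ P := by
    rcases hρΔ with ((((⟨i,j,hij,hf⟩|⟨i,hf⟩)|⟨k,l,hkl,hf⟩)|⟨k,hf⟩)|⟨i,k,hf⟩)|⟨k,hf⟩
    · rcases hf with rfl|rfl|rfl|rfl
      · by_cases h1 : (ε i : V m n) ∈ P
        · exact ⟨j, Or.inl fun h2 => hρP (hcl _ h1 _ h2 (mem_ee i j hij (Or.inl rfl)))⟩
        · exact ⟨i, Or.inl h1⟩
      · by_cases h1 : (ε i : V m n) ∈ P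
        · refine ⟨j, Or.inr fun h2 => hρP ?_⟩
          rw [sub_eq_add_neg]
          exact hcl _ h1 _ h2 (mem_ee i j hij (Or.inr (Or.inl (sub_eq_add_neg _ _).symm)))
        · exact ⟨i, Or.inl h1⟩
      · by_cases h1 : (-ε i : V m n) ∈ P
        · exact ⟨j, Or.inl fun h2 => hρP
            (hcl _ h1 _ h2 (mem_ee i j hij (Or.inr (Or.inr (Or.inl rfl)))))⟩
        · exact ⟨i, Or.inr h1⟩
      · by_cases h1 : (-ε i : V m n) ∈ P
        · refine ⟨j, Or.inr fun h2 => hρP ?_⟩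
          rw [sub_eq_add_neg]
          exact hcl _ h1 _ h2 (mem_ee i j hij (Or.inr (Or.inr (Or.inr (sub_eq_add_neg _ _).symm))))
        · exact ⟨i, Or.inr h1⟩
    · rcases hf with rfl|rfl
      · exact ⟨i, Or.inl hρP⟩
      · exact ⟨i, Or.inr hρP⟩
    · exact absurd (hdd k l hkl ρ hf) hρP
    · rcases hf with rfl|rfl
      · exact absurd (h2dP k).1 hρP
      · exact absurd (h2dP k).2 hρP
    · rcases hf with rfl|rfl|rfl|rfl
      · exact ⟨i, Or.inl fun h1 => hρP (hcl _ h1 _ (hδ k).1 (mem_ed i k (Or.inl rfl)))⟩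
      · refine ⟨i, Or.inl fun h1 => hρP ?_⟩
        rw [sub_eq_add_neg]
        exact hcl _ h1 _ (hδ k).2 (mem_ed i k (Or.inr (Or.inl (sub_eq_add_neg _ _).symm)))
      · exact ⟨i, Or.inr fun h1 => hρP
          (hcl _ h1 _ (hδ k).1 (mem_ed i k (Or.inr (Or.inr (Or.inl rfl)))))⟩
      · refine ⟨i, Or.inr fun h1 => hρP ?_⟩
        rw [sub_eq_add_neg]
        exact hcl _ h1 _ (hδ k).2 (mem_ed i k (Or.inr (Or.inr (Or.inr (sub_eq_add_neg _ _).symm))))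
    · rcases hf with rfl|rfl
      · exact absurd (hδ k).1 hρP
      · exact absurd (hδ k).2 hρP
  obtain ⟨i₀, hbad⟩ := hex
  have hcovε : ∀ j : Fin m, (ε j : V m n) ∈ P ∨ (-ε j : V m n) ∈ P := by
    intro j
    have h1 : (ε j : V m n) ∈ Δroot m n := mem_e j (Or.inl rfl)
    rw [hcov] at h1
    exact h1.imp id Set.mem_neg.mp
  have hmain : ∃ s₀ : ℝ, (s₀ = 1 ∨ s₀ = -1) ∧ s₀ • ε i₀ ∈ P ∧ -(s₀ • ε i₀) ∉ P := by
    rcases hbad with hb | hb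
    · refine ⟨-1, Or.inr rfl, ?_, ?_⟩
      · rw [neg_one_smul]; exact (hcovε i₀).resolve_left hb
      · rw [neg_one_smul, neg_neg]; exact hb
    · refine ⟨1, Or.inl rfl, ?_, ?_⟩
      · rw [one_smul]; exact (hcovε i₀).resolve_right hb
      · rw [one_smul]; exact hb
  obtain ⟨s₀, hs₀, hNP, hNN⟩ := hmain
  have hNmem : s₀ • ε i₀ ∈ P \ (-P) := ⟨hNP, fun hc => hNN (Set.mem_neg.mp hc)⟩
  have hothers : ∀ j, j ≠ i₀ → (ε j : V m n) ∈ P ∧ (-ε j : V m n) ∈ P := by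
    intro j hj
    constructor
    · by_contra hc
      have h1 : (-ε j : V m n) ∈ P := (hcovε j).resolve_left hc
      have h2 : (-ε j : V m n) ∈ P \ (-P) :=
        ⟨h1, fun hcc => hc (by have h3 := Set.mem_neg.mp hcc; rwa [neg_neg] at h3)⟩
      exact hcom _ hNmem _ h2
        (mem_ee' i₀ j (Ne.symm hj) hs₀ (Or.inr rfl) (by rw [neg_one_smul]))
    · by_contra hc
      have h1 : (ε j : V m n) ∈ P := (hcovε j).resolve_right hc
      have h2 : (ε j : V m n) ∈ P \ (-P) := ⟨h1, fun hcc => hc (Set.mem_neg.mp hcc)⟩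
      exact hcom _ hNmem _ h2 (mem_ee' i₀ j (Ne.symm hj) hs₀ (Or.inl rfl) (by rw [one_smul]))
  refine ⟨i₀, s₀, hs₀, ?_⟩
  have hPe : ∀ (a : ℝ), (a = 1 ∨ a = -1) → ∀ j, j ≠ i₀ → (a • ε j : V m n) ∈ P := by
    rintro a (rfl|rfl) j hj
    · rw [one_smul]; exact (hothers j hj).1
    · rw [neg_one_smul]; exact (hothers j hj).2
  have hmemN : ∀ u : V m n, -u ∈ P → -(s₀ • ε i₀) + u ∉ P := by
    intro u hu hw
    apply hNN
    have e : (-(s₀ • ε i₀) + u) + -u = -(s₀ • ε i₀) := by abel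
    have h3 := hcl _ hw _ hu
      (by rw [e]; exact mem_e' i₀ (neg_sign hs₀) (neg_smul s₀ (ε i₀)).symm)
    rwa [e] at h3
  have master : ∀ (a : ℝ), (a = 1 ∨ a = -1) → ∀ (w : V m n), w ∈ P → -w ∈ P →
      w (Sum.inl i₀) = 0 → ∀ i : Fin m, (a • ε i + w ∈ Δroot m n) →
      ((a • ε i + w ∈ P) ↔ 0 ≤ s₀ * ((a • ε i + w : V m n) (Sum.inl i₀))) := by
    intro a ha w hw hw' hw0 i hΔ
    by_cases hi : i = i₀
    · subst hi
      have hcoeff : (a • ε i + w : V m n) (Sum.inl i) = a := by simp [hw0]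
      rcases ha with rfl|rfl <;> rcases hs₀ with rfl|rfl
      · exact iff_of_true (hcl _ hNP _ hw hΔ) (by rw [hcoeff]; norm_num)
      · refine iff_of_false (fun hc => ?_) (by rw [hcoeff]; norm_num)
        have h4 := hmemN w hw'
        simp only [neg_smul, neg_neg, one_smul] at h4 hc
        exact h4 hc
      · refine iff_of_false (fun hc => ?_) (by rw [hcoeff]; norm_num)
        have h4 := hmemN w hw'
        simp only [neg_smul, neg_neg, one_smul] at h4 hc
        exact h4 hc
      · exact iff_of_true (hcl _ hNP _ hw hΔ) (by rw [hcoeff]; norm_num)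
    · have hcoeff : (a • ε i + w : V m n) (Sum.inl i₀) = 0 := by simp [hw0, Ne.symm hi]
      exact iff_of_true (hcl _ (hPe a ha i hi) _ hw hΔ) (by rw [hcoeff]; simp)
  have master0 : ∀ (a : ℝ), (a = 1 ∨ a = -1) → ∀ i : Fin m,
      ((a • ε i : V m n) ∈ P ↔ 0 ≤ s₀ * ((a • ε i : V m n) (Sum.inl i₀))) := by
    intro a ha i
    by_cases hi : i = i₀
    · subst hi
      have hcoeff : ((a • ε i : V m n)) (Sum.inl i) = a := by simp
      rcases ha with rfl|rfl <;> rcases hs₀ with rfl|rfl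
      · exact iff_of_true hNP (by rw [hcoeff]; norm_num)
      · refine iff_of_false (fun hc => ?_) (by rw [hcoeff]; norm_num)
        apply hNN
        simp only [neg_smul, one_smul, neg_neg] at hc ⊢
        exact hc
      · refine iff_of_false (fun hc => ?_) (by rw [hcoeff]; norm_num)
        apply hNN
        simp only [neg_smul, one_smul, neg_neg] at hc ⊢
        exact hc
      · exact iff_of_true hNP (by rw [hcoeff]; norm_num)
    · exact iff_of_true (hPe a ha i hi) (by simp [Ne.symm hi])
  have key : ∀ v, v ∈ Δroot m n → ((v ∈ P) ↔ 0 ≤ s₀ * v (Sum.inl i₀)) := by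
    intro v hv
    rcases hv with ((((⟨i,j,hij,hf⟩|⟨i,hf⟩)|⟨k,l,hkl,hf⟩)|⟨k,hf⟩)|⟨i,k,hf⟩)|⟨k,hf⟩
    · by_cases hj : j = i₀
      · have hi : i ≠ i₀ := fun e => hij (by rw [e, hj])
        have hw1 : (-(-ε i) : V m n) ∈ P := by rw [neg_neg]; exact (hothers i hi).1
        have h0 : (ε i : V m n) (Sum.inl i₀) = 0 := by simp [Ne.symm hi]
        have h0' : (-ε i : V m n) (Sum.inl i₀) = 0 := by simp [Ne.symm hi]
        rcases hf with rfl|rfl|rfl|rfl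
        · have e : (ε i + ε j : V m n) = (1:ℝ) • ε j + ε i := by rw [one_smul]; abel
          rw [e]
          exact master 1 (Or.inl rfl) (ε i) (hothers i hi).1 (hothers i hi).2 h0 j
            (e ▸ mem_ee i j hij (Or.inl rfl))
        · have e : (ε i - ε j : V m n) = (-1:ℝ) • ε j + ε i := by rw [neg_one_smul]; abel
          rw [e]
          exact master (-1) (Or.inr rfl) (ε i) (hothers i hi).1 (hothers i hi).2 h0 j
            (e ▸ mem_ee i j hij (Or.inr (Or.inl rfl)))
        · have e : (-ε i + ε j : V m n) = (1:ℝ) • ε j + (-ε i) := by rw [one_smul]; abel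
          rw [e]
          exact master 1 (Or.inl rfl) (-ε i) (hothers i hi).2 hw1 h0' j
            (e ▸ mem_ee i j hij (Or.inr (Or.inr (Or.inl rfl))))
        · have e : (-ε i - ε j : V m n) = (-1:ℝ) • ε j + (-ε i) := by rw [neg_one_smul]; abel
          rw [e]
          exact master (-1) (Or.inr rfl) (-ε i) (hothers i hi).2 hw1 h0' j
            (e ▸ mem_ee i j hij (Or.inr (Or.inr (Or.inr rfl))))
      · have hw1 : (-(-ε j) : V m n) ∈ P := by rw [neg_neg]; exact (hothers j hj).1
        have h0 : (ε j : V m n) (Sum.inl i₀) = 0 := by simp [Ne.symm hj]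
        have h0' : (-ε j : V m n) (Sum.inl i₀) = 0 := by simp [Ne.symm hj]
        rcases hf with rfl|rfl|rfl|rfl
        · have e : (ε i + ε j : V m n) = (1:ℝ) • ε i + ε j := by rw [one_smul]
          rw [e]
          exact master 1 (Or.inl rfl) (ε j) (hothers j hj).1 (hothers j hj).2 h0 i
            (e ▸ mem_ee i j hij (Or.inl rfl))
        · have e : (ε i - ε j : V m n) = (1:ℝ) • ε i + (-ε j) := by
            rw [one_smul, sub_eq_add_neg]
          rw [e]
          exact master 1 (Or.inl rfl) (-ε j) (hothers j hj).2 hw1 h0' i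
            (e ▸ mem_ee i j hij (Or.inr (Or.inl rfl)))
        · have e : (-ε i + ε j : V m n) = (-1:ℝ) • ε i + ε j := by rw [neg_one_smul]
          rw [e]
          exact master (-1) (Or.inr rfl) (ε j) (hothers j hj).1 (hothers j hj).2 h0 i
            (e ▸ mem_ee i j hij (Or.inr (Or.inr (Or.inl rfl))))
        · have e : (-ε i - ε j : V m n) = (-1:ℝ) • ε i + (-ε j) := by
            rw [neg_one_smul, sub_eq_add_neg]
          rw [e]
          exact master (-1) (Or.inr rfl) (-ε j) (hothers j hj).2 hw1 h0' i
            (e ▸ mem_ee i j hij (Or.inr (Or.inr (Or.inr rfl))))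
    · rcases hf with rfl|rfl
      · rw [show (ε i : V m n) = (1:ℝ) • ε i from (one_smul ℝ _).symm]
        exact master0 1 (Or.inl rfl) i
      · rw [show (-ε i : V m n) = (-1:ℝ) • ε i from (neg_one_smul ℝ _).symm]
        exact master0 (-1) (Or.inr rfl) i
    · exact iff_of_true (hdd k l hkl v hf) (by rcases hf with rfl|rfl|rfl|rfl <;> simp)
    · rcases hf with rfl|rfl
      · exact iff_of_true (h2dP k).1 (by simp)
      · exact iff_of_true (h2dP k).2 (by simp)
    · have hwd : (-(-δ k) : V m n) ∈ P := by rw [neg_neg]; exact (hδ k).1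
      have h0 : (δ k : V m n) (Sum.inl i₀) = 0 := by simp
      have h0' : (-δ k : V m n) (Sum.inl i₀) = 0 := by simp
      rcases hf with rfl|rfl|rfl|rfl
      · have e : (ε i + δ k : V m n) = (1:ℝ) • ε i + δ k := by rw [one_smul]
        rw [e]
        exact master 1 (Or.inl rfl) (δ k) (hδ k).1 (hδ k).2 h0 i
          (e ▸ mem_ed i k (Or.inl rfl))
      · have e : (ε i - δ k : V m n) = (1:ℝ) • ε i + (-δ k) := by
          rw [one_smul, sub_eq_add_neg]
        rw [e]
        exact master 1 (Or.inl rfl) (-δ k) (hδ k).2 hwd h0' i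
          (e ▸ mem_ed i k (Or.inr (Or.inl rfl)))
      · have e : (-ε i + δ k : V m n) = (-1:ℝ) • ε i + δ k := by rw [neg_one_smul]
        rw [e]
        exact master (-1) (Or.inr rfl) (δ k) (hδ k).1 (hδ k).2 h0 i
          (e ▸ mem_ed i k (Or.inr (Or.inr (Or.inl rfl))))
      · have e : (-ε i - δ k : V m n) = (-1:ℝ) • ε i + (-δ k) := by
          rw [neg_one_smul, sub_eq_add_neg]
        rw [e]
        exact master (-1) (Or.inr rfl) (-δ k) (hδ k).2 hwd h0' i
          (e ▸ mem_ed i k (Or.inr (Or.inr (Or.inr rfl))))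
    · rcases hf with rfl|rfl
      · exact iff_of_true (hδ k).1 (by simp)
      · exact iff_of_true (hδ k).2 (by simp)
  ext v
  constructor
  · intro hv
    exact ⟨hP hv, (key v (hP hv)).mp hv⟩
  · rintro ⟨h1, h2⟩
    exact (key v h1).mpr h2
end OspOdd

theorem stmt_5 (m n : ℕ) (hm : 1 ≤ m) (hn : 1 ≤ n)
    (P : Set (OspOdd.V m n)) (hP : P ⊆ OspOdd.Δroot m n) :
    (IsCominuscule (OspOdd.Δroot m n) P ↔
      ∃ (σ : Equiv.Perm (Fin m)) (τ : Equiv.Perm (Fin n)) (s : Fin m → ℝ) (t : Fin n → ℝ),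
        (∀ i, s i = 1 ∨ s i = -1) ∧ (∀ k, t k = 1 ∨ t k = -1) ∧
        OspOdd.act σ τ s t '' P = OspOdd.P₀ m n) ∧
    IsCominuscule (OspOdd.Δroot m n) (OspOdd.P₀ m n) := by
  have hA := OspOdd.P₀_cominuscule (n := n) hm
  refine ⟨⟨?_, ?_⟩, hA⟩
  · intro h
    obtain ⟨i₀, s₀, hs₀, hPeq⟩ := OspOdd.classify hm hP h
    refine ⟨Equiv.swap ⟨0, hm⟩ i₀, 1, fun i => if i = (⟨0, hm⟩ : Fin m) then s₀ else 1,
      fun _ => 1, ?_, fun _ => Or.inl rfl, ?_⟩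
    · intro i
      by_cases h' : i = (⟨0, hm⟩ : Fin m)
      · simpa [h'] using hs₀
      · simp [h']
    · have hsg : ∀ i : Fin m, (if i = (⟨0, hm⟩ : Fin m) then s₀ else 1) = 1 ∨
          (if i = (⟨0, hm⟩ : Fin m) then s₀ else 1) = -1 := by
        intro i
        by_cases h' : i = (⟨0, hm⟩ : Fin m)
        · simpa [h'] using hs₀
        · simp [h']
      have htg : ∀ k : Fin n, (fun (_ : Fin n) => (1:ℝ)) k = 1 ∨
          (fun (_ : Fin n) => (1:ℝ)) k = -1 := fun _ => Or.inl rfl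
      have hcoord : ∀ v : OspOdd.V m n,
          (OspOdd.act (Equiv.swap ⟨0, hm⟩ i₀) 1
            (fun i => if i = (⟨0, hm⟩ : Fin m) then s₀ else 1) (fun _ => 1) v)
            (Sum.inl ⟨0, hm⟩) = s₀ * v (Sum.inl i₀) := by
        intro v
        show (if (⟨0, hm⟩ : Fin m) = (⟨0, hm⟩ : Fin m) then s₀ else 1) *
          v (Sum.inl ((Equiv.swap (⟨0, hm⟩ : Fin m) i₀).symm ⟨0, hm⟩)) = s₀ * v (Sum.inl i₀)
        rw [Equiv.symm_swap, Equiv.swap_apply_left, if_pos rfl]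
      rw [hPeq, OspOdd.P₀_eq hm]
      apply Set.Subset.antisymm
      · rintro u ⟨v, ⟨hv1, hv2⟩, rfl⟩
        refine ⟨OspOdd.act_mapsTo _ _ _ _ hsg htg hv1, ?_⟩
        show (0:ℝ) ≤ _
        rw [hcoord v]
        exact hv2
      · rintro u ⟨hu1, hu2⟩
        have h2 : u ∈ OspOdd.act (Equiv.swap ⟨0, hm⟩ i₀) 1
            (fun i => if i = (⟨0, hm⟩ : Fin m) then s₀ else 1) (fun _ => 1) ''
            OspOdd.Δroot m n := by
          rw [OspOdd.act_image_Δ _ _ _ _ hsg htg]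
          exact hu1
        obtain ⟨v, hv, rfl⟩ := h2
        exact ⟨v, ⟨hv, hcoord v ▸ hu2⟩, rfl⟩
  · rintro ⟨σ, τ, s, t, hsg, htg, himg⟩
    exact OspOdd.comin_transfer (OspOdd.act_add σ τ s t) (OspOdd.act_neg σ τ s t)
      (OspOdd.act_injective σ τ s t hsg htg) (OspOdd.act_image_Δ σ τ s t hsg htg) hP
      (by rw [himg]; exact hA)
end
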